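/- arXiv:1902.02935 — 8 statements merged into one kernel-verified Lean document; each statement's English description precedes it below -/
import Mathlib

section
/- In a rent division economy with quasi-linear preferences, if an envy-free allocation exists with assignment σ, then σ maximizes the total value Σ_i v_{iσ(i)} over all bijections from agents to rooms. -/
/-- If an envy-free allocation exists with assignment `σ` in a
quasi-linear economy, then `σ` maximizes total value over all bijections. -/
theorem stmt_1 (n : ℕ) (v : Fin n → Fin n → ℝ) (σ : Equiv.Perm (Fin n))
    (r : Fin n → ℝ) (m : ℝ) (hsum : ∑ a, r a = m)
    (hEF : ∀ i j : Fin n, v i (σ j) - r (σ j) ≤ v i (σ i) - r (σ i)) :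
    ∀ γ : Equiv.Perm (Fin n), ∑ i, v i (γ i) ≤ ∑ i, v i (σ i) := by
  intro γ
  have key : ∀ i, v i (γ i) - r (γ i) ≤ v i (σ i) - r (σ i) := by
    intro i
    have := hEF i (σ⁻¹ (γ i))
    simpa using this
  have hr : ∑ i, r (γ i) = ∑ i, r (σ i) := by
    rw [Equiv.sum_comp γ r, Equiv.sum_comp σ r]
  have h : ∑ i, (v i (γ i) - r (γ i)) ≤ ∑ i, (v i (σ i) - r (σ i)) :=
    Finset.sum_le_sum (fun i _ => key i)
  simp only [Finset.sum_sub_distrib] at h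
  linarith
end

section
/- In a quasi-linear rent division economy, if (r, σ) and (t, μ) are both envy-free allocations for the same total rent m, then (t, σ) is also envy-free, and moreover every agent is indifferent between her bundle under μ and her bundle under σ at prices t: v_{iμ(i)} - t_{μ(i)} = v_{iσ(i)} - t_{σ(i)} for all i. -/
/-- If `(r, σ)` and `(t, μ)` are both envy-free for the same total
rent `m` in a quasi-linear economy, then `(t, σ)` is envy-free and every agent
is indifferent between her bundle under `μ` and under `σ` at prices `t`. -/
theorem stmt_2 (n : ℕ) (v : Fin n → Fin n → ℝ) (m : ℝ)
    (r t : Fin n → ℝ) (σ μ : Equiv.Perm (Fin n))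
    (hr : ∑ a, r a = m) (ht : ∑ a, t a = m)
    (hEFr : ∀ i j : Fin n, v i (σ j) - r (σ j) ≤ v i (σ i) - r (σ i))
    (hEFt : ∀ i j : Fin n, v i (μ j) - t (μ j) ≤ v i (μ i) - t (μ i)) :
    (∀ i j : Fin n, v i (σ j) - t (σ j) ≤ v i (σ i) - t (σ i)) ∧
      ∀ i : Fin n, v i (μ i) - t (μ i) = v i (σ i) - t (σ i) := by
  have hrσ : ∑ i, r (σ i) = m := by rw [Equiv.sum_comp σ r]; exact hr
  have hrμ : ∑ i, r (μ i) = m := by rw [Equiv.sum_comp μ r]; exact hr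
  have htσ : ∑ i, t (σ i) = m := by rw [Equiv.sum_comp σ t]; exact ht
  have htμ : ∑ i, t (μ i) = m := by rw [Equiv.sum_comp μ t]; exact ht
  -- pointwise: σ-bundle ≤ μ-bundle at prices t
  have hBA : ∀ i, v i (σ i) - t (σ i) ≤ v i (μ i) - t (μ i) := by
    intro i
    have := hEFt i (μ.symm (σ i))
    simpa using this
  -- pointwise: μ-bundle ≤ σ-bundle at prices r
  have hAB : ∀ i, v i (μ i) - r (μ i) ≤ v i (σ i) - r (σ i) := by
    intro i
    have := hEFr i (σ.symm (μ i))
    simpa using this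
  -- total welfare comparison
  have hsum1 : ∑ i, (v i (μ i) - r (μ i)) ≤ ∑ i, (v i (σ i) - r (σ i)) :=
    Finset.sum_le_sum fun i _ => hAB i
  have hvμσ : ∑ i, v i (μ i) ≤ ∑ i, v i (σ i) := by
    have h1 : ∑ i, (v i (μ i) - r (μ i)) = (∑ i, v i (μ i)) - m := by
      rw [Finset.sum_sub_distrib, hrμ]
    have h2 : ∑ i, (v i (σ i) - r (σ i)) = (∑ i, v i (σ i)) - m := by
      rw [Finset.sum_sub_distrib, hrσ]
    linarith [hsum1, h1.symm ▸ h2.symm ▸ hsum1]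
  have hsumA : ∑ i, (v i (μ i) - t (μ i)) = (∑ i, v i (μ i)) - m := by
    rw [Finset.sum_sub_distrib, htμ]
  have hsumB : ∑ i, (v i (σ i) - t (σ i)) = (∑ i, v i (σ i)) - m := by
    rw [Finset.sum_sub_distrib, htσ]
  have hle : ∑ i, (v i (μ i) - t (μ i)) ≤ ∑ i, (v i (σ i) - t (σ i)) := by
    rw [hsumA, hsumB]; linarith
  have hge : ∑ i, (v i (σ i) - t (σ i)) ≤ ∑ i, (v i (μ i) - t (μ i)) :=
    Finset.sum_le_sum fun i _ => hBA i
  have hsumeq : ∑ i, (v i (σ i) - t (σ i)) = ∑ i, (v i (μ i) - t (μ i)) :=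
    le_antisymm hge hle
  have heq : ∀ i : Fin n, v i (σ i) - t (σ i) = v i (μ i) - t (μ i) := by
    intro i
    have := (Finset.sum_eq_sum_iff_of_le (fun i _ => hBA i)).mp hsumeq i (Finset.mem_univ i)
    exact this
  refine ⟨fun i j => ?_, fun i => (heq i).symm⟩
  calc v i (σ j) - t (σ j) ≤ v i (μ i) - t (μ i) := by
        have := hEFt i (μ.symm (σ j)); simpa using this
    _ = v i (σ i) - t (σ i) := (heq i).symm
end

section
/- (Converse Perturbation Lemma) Let u ∈ B^N, ε > 0, (r, σ) envy-free for rent m and (t, σ) envy-free for rent m − ε with r_a > t_a for every room a. If the set of binding/violated budget pairs is the same at r and t, i.e., B^u(r) = B^u(t) where B^u(s) = {(i, a) : s_a ≥ b_i}, then σ is a maximum-weight perfect matching in F^u(r). -/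
/-- Converse Perturbation Lemma: in the budget-constrained
quasi-linear domain, if `(r, σ)` is envy-free for rent `m`, `(t, σ)` is
envy-free for rent `m - ε` with `t_a < r_a` everywhere, and the budget regimes
agree (`B^u(r) = B^u(t)`), then `σ` is a maximum-weight perfect matching in the
weighted indifference graph `F^u(r)`. -/
theorem stmt_7 (n : ℕ) (v : Fin n → Fin n → ℝ) (b ρ : Fin n → ℝ)
    (hb : ∀ i, 0 ≤ b i) (hρ : ∀ i, 0 ≤ ρ i)
    (u : Fin n → ℝ → Fin n → ℝ)
    (hu : ∀ i p a, u i p a = v i a - p - ρ i * max 0 (p - b i))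
    (r t : Fin n → ℝ) (σ : Equiv.Perm (Fin n)) (m ε : ℝ) (hε : 0 < ε)
    (hrsum : ∑ a, r a = m) (htsum : ∑ a, t a = m - ε)
    (hEFr : ∀ i j : Fin n, u i (r (σ j)) (σ j) ≤ u i (r (σ i)) (σ i))
    (hEFt : ∀ i j : Fin n, u i (t (σ j)) (σ j) ≤ u i (t (σ i)) (σ i))
    (hrt : ∀ a, t a < r a)
    (hB : ∀ i a, b i ≤ r a ↔ b i ≤ t a)
    (lam : Fin n → Fin n → ℝ)
    (hlam : ∀ i a, lam i a = if b i < r a then 1 + ρ i else 1) :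
    ∀ γ : Equiv.Perm (Fin n),
      (∀ i, u i (r (γ i)) (γ i) = u i (r (σ i)) (σ i)) →
      ∑ i, Real.log (lam i (γ i)) ≤ ∑ i, Real.log (lam i (σ i)) := by
  intro γ hγ
  have hδ : ∀ a, 0 < r a - t a := fun a => sub_pos.2 (hrt a)
  have hlampos : ∀ i a, 0 < lam i a := by
    intro i a; rw [hlam]; split
    · linarith [hρ i]
    · norm_num
  have key : ∀ i a, u i (t a) a = u i (r a) a + lam i a * (r a - t a) := by
    intro i a
    rw [hu, hu, hlam]
    rcases lt_or_ge (b i) (r a) with h | h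
    · have hbt : b i ≤ t a := (hB i a).1 h.le
      rw [if_pos h, max_eq_right (by linarith : (0:ℝ) ≤ r a - b i),
        max_eq_right (by linarith : (0:ℝ) ≤ t a - b i)]
      ring
    · have hra : r a < b i := by
        rcases eq_or_lt_of_le h with h' | h'
        · exfalso
          have := (hB i a).1 (le_of_eq h'.symm)
          have := hrt a
          linarith
        · exact h'
      rw [if_neg (not_lt.2 h),
        max_eq_left (by linarith : r a - b i ≤ (0:ℝ)),
        max_eq_left (by linarith [hrt a] : t a - b i ≤ (0:ℝ))]
      ring
  have step : ∀ i, lam i (γ i) * (r (γ i) - t (γ i)) ≤ lam i (σ i) * (r (σ i) - t (σ i)) := by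
    intro i
    have h1 := hEFt i (σ.symm (γ i))
    rw [Equiv.apply_symm_apply] at h1
    have h2 := key i (γ i)
    have h3 := key i (σ i)
    have h4 := hγ i
    linarith
  have hsum : ∑ i, (Real.log (lam i (γ i)) + Real.log (r (γ i) - t (γ i)))
      ≤ ∑ i, (Real.log (lam i (σ i)) + Real.log (r (σ i) - t (σ i))) := by
    apply Finset.sum_le_sum
    intro i _
    rw [← Real.log_mul (ne_of_gt (hlampos _ _)) (ne_of_gt (hδ _)),
        ← Real.log_mul (ne_of_gt (hlampos _ _)) (ne_of_gt (hδ _))]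
    exact Real.log_le_log (mul_pos (hlampos _ _) (hδ _)) (step i)
  have hγδ : ∑ i, Real.log (r (γ i) - t (γ i)) = ∑ a, Real.log (r a - t a) :=
    Equiv.sum_comp γ (fun a => Real.log (r a - t a))
  have hσδ : ∑ i, Real.log (r (σ i) - t (σ i)) = ∑ a, Real.log (r a - t a) :=
    Equiv.sum_comp σ (fun a => Real.log (r a - t a))
  rw [Finset.sum_add_distrib, Finset.sum_add_distrib, hγδ, hσδ] at hsum
  linarith
end

section
/- For every total rent M large enough — specifically M ≥ n·(max_{i, a, b} (V_{ib} − V_{ia}) + max_j b_j) where V_{ia} = (v_{ia} + ρ_i b_i)/(1 + ρ_i) — the envy-free set of the budget-constrained economy u coincides with the envy-free set of the economy with utilities ũ_i(p, a) = (1 + ρ_i)(V_{ia} − p), and moreover the utilities agree at every envy-free allocation: at any envy-free (t, μ) for rent M, every room price satisfies t_a ≥ max_j b_j, so u_i(t_{μ(i)}, μ(i)) = ũ_i(t_{μ(i)}, μ(i)) for all i. -/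
/-- for every rent `M ≥ n·(max_{i,a,c}(V_{ic} − V_{ia}) + max_j b_j)`
(stated pointwise), the envy-free sets of the budget-constrained economy `u`
and the rescaled quasi-linear economy `ũ_i(p,a) = (1+ρ_i)(V_{ia} − p)` coincide;
moreover at every envy-free allocation for rent `M` every price is at least
every budget and the two utilities agree at each agent's bundle. -/
theorem stmt_9 (n : ℕ) (v : Fin n → Fin n → ℝ) (b ρ : Fin n → ℝ)
    (hb : ∀ i, 0 ≤ b i) (hρ : ∀ i, 0 ≤ ρ i)
    (u ut : Fin n → ℝ → Fin n → ℝ)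
    (hu : ∀ i p a, u i p a = v i a - p - ρ i * max 0 (p - b i))
    (V : Fin n → Fin n → ℝ)
    (hV : ∀ i a, V i a = (v i a + ρ i * b i) / (1 + ρ i))
    (hut : ∀ i p a, ut i p a = (1 + ρ i) * (V i a - p))
    (M : ℝ) (hM : ∀ i a c j : Fin n, (n : ℝ) * (V i c - V i a + b j) ≤ M) :
    (∀ (t : Fin n → ℝ) (μ : Equiv.Perm (Fin n)), (∑ a, t a = M) →
      ((∀ i j : Fin n, u i (t (μ j)) (μ j) ≤ u i (t (μ i)) (μ i)) ↔
        (∀ i j : Fin n, ut i (t (μ j)) (μ j) ≤ ut i (t (μ i)) (μ i)))) ∧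
    (∀ (t : Fin n → ℝ) (μ : Equiv.Perm (Fin n)), (∑ a, t a = M) →
      (∀ i j : Fin n, u i (t (μ j)) (μ j) ≤ u i (t (μ i)) (μ i)) →
      (∀ a j : Fin n, b j ≤ t a) ∧
        ∀ i : Fin n, u i (t (μ i)) (μ i) = ut i (t (μ i)) (μ i)) := by
  have hρ1 : ∀ i : Fin n, (1 : ℝ) + ρ i ≠ 0 := fun i => by have := hρ i; positivity
  -- alternative formula for u
  have hu' : ∀ i p a, u i p a = (1 + ρ i) * V i a - p - ρ i * max (b i) p := by
    intro i p a
    rw [hu, hV]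
    rcases le_total p (b i) with h | h
    · rw [max_eq_left (by linarith), max_eq_left h]
      field_simp [hρ1 i]
      ring
    · rw [max_eq_right (by linarith), max_eq_right h]
      field_simp [hρ1 i]
      ring
  -- u and ut agree when price is above budget
  have huut : ∀ (i : Fin n) (p) (a : Fin n), b i ≤ p → u i p a = ut i p a := by
    intro i p a h
    rw [hu', hut, max_eq_right h]
    ring
  -- there is a room priced at least M/n
  have hstar : ∀ (t : Fin n → ℝ), (∑ a, t a = M) → (0 < n) → ∃ a : Fin n, M / n ≤ t a := by
    intro t hsum hn
    by_contra hc
    push_neg at hc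
    have h1 : ∑ x : Fin n, t x < ∑ _x : Fin n, M / n :=
      Finset.sum_lt_sum_of_nonempty ⟨⟨0, hn⟩, Finset.mem_univ _⟩
        (fun x _ => hc x)
    rw [hsum, Finset.sum_const, Finset.card_univ, Fintype.card_fin, nsmul_eq_mul] at h1
    have hn' : (0:ℝ) < n := by exact_mod_cast hn
    have : (n : ℝ) * (M / n) = M := by field_simp
    linarith
  -- key bound from hM
  have hMn : ∀ (i a c j : Fin n), V i c - V i a + b j ≤ M / n := by
    intro i a c j
    have hn : (0:ℝ) < n := by exact_mod_cast i.pos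
    rw [le_div_iff₀ hn]
    linarith [hM i a c j]
  -- key lemma for u: envy-freeness implies all prices exceed all budgets
  have keyU : ∀ (t : Fin n → ℝ) (μ : Equiv.Perm (Fin n)), (∑ a, t a = M) →
      (∀ i j : Fin n, u i (t (μ j)) (μ j) ≤ u i (t (μ i)) (μ i)) →
      ∀ a j : Fin n, b j ≤ t a := by
    intro t μ hsum hEF a j
    have hn : 0 < n := a.pos
    obtain ⟨jm, _, hjm⟩ := Finset.exists_max_image Finset.univ b ⟨j, Finset.mem_univ j⟩
    have hjm' : ∀ x : Fin n, b x ≤ b jm := fun x => hjm x (Finset.mem_univ x)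
    suffices h : b jm ≤ t a from le_trans (hjm' j) h
    obtain ⟨as, has⟩ := hstar t hsum hn
    set k := μ.symm as with hk
    have hEF' := hEF k (μ.symm a)
    rw [Equiv.apply_symm_apply, Equiv.apply_symm_apply] at hEF'
    rw [hu' k (t a) a, hu' k (t as) as] at hEF'
    -- hEF' : (1+ρ k)*V k a - t a - ρ k * max (b k) (t a) ≤ (1+ρ k)*V k as - t as - ρ k * max (b k) (t as)
    have h1 : V k as - V k a + b jm ≤ M / n := hMn k a as jm
    have h2 : t as ≤ max (b k) (t as) := le_max_right _ _
    have hρk := hρ k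
    -- so t a + ρ k * max (b k) (t a) ≥ (1+ρ k) * b jm
    have h3 : (1 + ρ k) * b jm ≤ t a + ρ k * max (b k) (t a) := by
      have : (1 + ρ k) * (t as + (V k a - V k as)) ≤ t a + ρ k * max (b k) (t a) := by
        nlinarith [mul_le_mul_of_nonneg_left h2 hρk]
      have h4 : b jm ≤ t as + (V k a - V k as) := by linarith
      nlinarith
    rcases le_total (b jm) (t a) with h | h
    · exact h
    · have h5 : max (b k) (t a) ≤ b jm := max_le (hjm' k) h
      nlinarith [mul_le_mul_of_nonneg_left h5 hρk]
  -- key lemma for ut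
  have keyUt : ∀ (t : Fin n → ℝ) (μ : Equiv.Perm (Fin n)), (∑ a, t a = M) →
      (∀ i j : Fin n, ut i (t (μ j)) (μ j) ≤ ut i (t (μ i)) (μ i)) →
      ∀ a j : Fin n, b j ≤ t a := by
    intro t μ hsum hEF a j
    have hn : 0 < n := a.pos
    obtain ⟨as, has⟩ := hstar t hsum hn
    set k := μ.symm as with hk
    have hEF' := hEF k (μ.symm a)
    rw [Equiv.apply_symm_apply, Equiv.apply_symm_apply] at hEF'
    rw [hut k (t a) a, hut k (t as) as] at hEF'
    have hρk := hρ k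
    have hpos : (0:ℝ) < 1 + ρ k := by linarith
    have h0 : V k a - t a ≤ V k as - t as := by
      have := (mul_le_mul_iff_right₀ hpos).mp hEF'
      linarith
    have h1 : V k as - V k a + b j ≤ M / n := hMn k a as j
    linarith
  refine ⟨?_, ?_⟩
  · intro t μ hsum
    constructor
    · intro hEF i jj
      have hbd := keyU t μ hsum hEF
      rw [← huut i _ (μ jj) (hbd (μ jj) i), ← huut i _ (μ i) (hbd (μ i) i)]
      exact hEF i jj
    · intro hEF i jj
      have hbd := keyUt t μ hsum hEF
      rw [huut i _ (μ jj) (hbd (μ jj) i), huut i _ (μ i) (hbd (μ i) i)]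
      exact hEF i jj
  · intro t μ hsum hEF
    have hbd := keyU t μ hsum hEF
    exact ⟨hbd, fun i => huut i _ (μ i) (hbd (μ i) i)⟩
end

section
/- (Bounded rent-flow under budget-constrained preferences) There exists a constant θ > 0, depending only on n and the maximal budget violation index ρ̄, such that for any subset M of agents with |M| rooms C, budget-constrained preferences u ∈ B(C)^M with indices ρ_i ≤ ρ̄, any room a ∈ C, any ε > 0, any allocation (t, σ) maximizing the price of room a over envy-free allocations with total rent l, and any allocation (r, μ) maximizing the price of room a over envy-free allocations with total rent l + ε: r_a − t_a ≥ θ·ε. In fact one may take θ = 1/(n(1 + ρ̄)^{n²}). -/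
namespace Stmt11

variable {m : ℕ}

/-- disutility of money for agent `i`. -/
def ff (ρ b : Fin m → ℝ) (i : Fin m) (p : ℝ) : ℝ := p + ρ i * max 0 (p - b i)

/-- utility -/
def U (v : Fin m → Fin m → ℝ) (ρ b : Fin m → ℝ) (i : Fin m) (p : ℝ) (c : Fin m) : ℝ :=
  v i c - ff ρ b i p

lemma U_eq (v : Fin m → Fin m → ℝ) (ρ b : Fin m → ℝ) (i : Fin m) (p : ℝ) (c : Fin m) :
    U v ρ b i p c = v i c - p - ρ i * max 0 (p - b i) := by
  simp [U, ff]; ring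

/-- right slope of `ff` -/
noncomputable def sl (ρ b : Fin m → ℝ) (i : Fin m) (p : ℝ) : ℝ := if b i ≤ p then 1 + ρ i else 1

section Basic
variable (ρ b : Fin m → ℝ) (ρbar : ℝ)

lemma sl_ge_one (hρ0 : ∀ i, 0 ≤ ρ i) (i : Fin m) (p : ℝ) : 1 ≤ sl ρ b i p := by
  unfold sl; split
  · linarith [hρ0 i]
  · exact le_rfl

lemma sl_pos (hρ0 : ∀ i, 0 ≤ ρ i) (i : Fin m) (p : ℝ) : 0 < sl ρ b i p :=
  lt_of_lt_of_le one_pos (sl_ge_one ρ b hρ0 i p)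

lemma sl_le_K (hρ0 : ∀ i, 0 ≤ ρ i) (hρbar : ∀ i, ρ i ≤ ρbar) (i : Fin m) (p : ℝ) :
    sl ρ b i p ≤ 1 + ρbar := by
  unfold sl; split
  · linarith [hρbar i]
  · linarith [le_trans (hρ0 i) (hρbar i)]

lemma ff_mono (hρ0 : ∀ i, 0 ≤ ρ i) (i : Fin m) {p q : ℝ} (h : p ≤ q) :
    ff ρ b i p ≤ ff ρ b i q := by
  unfold ff
  have h1 : max 0 (p - b i) ≤ max 0 (q - b i) := max_le_max le_rfl (by linarith)
  nlinarith [hρ0 i]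

lemma ff_incr_le (hρ0 : ∀ i, 0 ≤ ρ i) (hρbar : ∀ i, ρ i ≤ ρbar)
    (i : Fin m) {p h : ℝ} (hh : 0 ≤ h) :
    ff ρ b i (p + h) ≤ ff ρ b i p + (1 + ρbar) * h := by
  unfold ff
  have h1 : max 0 (p + h - b i) ≤ max 0 (p - b i) + h := by
    rcases le_total 0 (p - b i) with hc | hc
    · rw [max_eq_right (by linarith : (0:ℝ) ≤ p + h - b i), max_eq_right hc]; linarith
    · rcases le_total 0 (p + h - b i) with hd | hd
      · rw [max_eq_right hd, max_eq_left (by linarith)]; linarith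
      · rw [max_eq_left hd, max_eq_left (by linarith)]; linarith
  have h2 : ρ i * max 0 (p + h - b i) ≤ ρ i * (max 0 (p - b i) + h) :=
    mul_le_mul_of_nonneg_left h1 (hρ0 i)
  have h3 : ρ i * h ≤ ρbar * h := mul_le_mul_of_nonneg_right (hρbar i) hh
  nlinarith

/-- exact increment when no kink is crossed -/
lemma ff_incr_exact (i : Fin m) {p h : ℝ} (hh : 0 ≤ h) (hk : p < b i → p + h ≤ b i) :
    ff ρ b i (p + h) = ff ρ b i p + sl ρ b i p * h := by
  unfold ff sl
  rcases lt_or_ge p (b i) with hc | hc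
  · have h2 := hk hc
    rw [if_neg (not_le.mpr hc), max_eq_left (by linarith), max_eq_left (by linarith)]
    ring
  · rw [if_pos hc, max_eq_right (by linarith), max_eq_right (by linarith)]
    ring

end Basic





/-- rotation along a cycle given by `g` on `[0,k)` -/
noncomputable def rotFun (g : ℕ → Fin m) (k : ℕ) (x : Fin m) : Fin m :=
  if h : ∃ j, j < k ∧ g j = x then g ((Classical.choose h + 1) % k) else x

lemma rotFun_apply (g : ℕ → Fin m) (k : ℕ)
    (hinj : ∀ j1 < k, ∀ j2 < k, g j1 = g j2 → j1 = j2) {j : ℕ} (hj : j < k) :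
    rotFun g k (g j) = g ((j + 1) % k) := by
  have h : ∃ j', j' < k ∧ g j' = g j := ⟨j, hj, rfl⟩
  rw [rotFun, dif_pos h]
  have hs := Classical.choose_spec h
  have : Classical.choose h = j := hinj _ hs.1 _ hj hs.2
  rw [this]

lemma rotFun_fix (g : ℕ → Fin m) (k : ℕ) {x : Fin m} (hx : ¬∃ j, j < k ∧ g j = x) :
    rotFun g k x = x := by rw [rotFun, dif_neg hx]

lemma rotFun_injective (g : ℕ → Fin m) (k : ℕ) (hk : 0 < k)
    (hinj : ∀ j1 < k, ∀ j2 < k, g j1 = g j2 → j1 = j2) :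
    Function.Injective (rotFun g k) := by
  intro x1 x2 heq
  by_cases h1 : ∃ j, j < k ∧ g j = x1 <;> by_cases h2 : ∃ j, j < k ∧ g j = x2
  · obtain ⟨j1, hj1, hg1⟩ := h1
    obtain ⟨j2, hj2, hg2⟩ := h2
    rw [← hg1, ← hg2, rotFun_apply g k hinj hj1, rotFun_apply g k hinj hj2] at heq
    have hmod : (j1 + 1) % k = (j2 + 1) % k :=
      hinj _ (Nat.mod_lt _ hk) _ (Nat.mod_lt _ hk) heq
    have : j1 % k = j2 % k := by
      have := congrArg (fun z => (z + (k - 1)) % k) hmod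
      rw [Nat.mod_add_mod, Nat.mod_add_mod, Nat.add_assoc, Nat.add_assoc,
        Nat.add_sub_cancel' hk] at this
      rwa [Nat.add_mod_right, Nat.add_mod_right] at this
    rw [Nat.mod_eq_of_lt hj1, Nat.mod_eq_of_lt hj2] at this
    rw [← hg1, ← hg2, this]
  · exfalso
    obtain ⟨j1, hj1, hg1⟩ := h1
    rw [← hg1, rotFun_apply g k hinj hj1, rotFun_fix g k h2] at heq
    exact h2 ⟨(j1 + 1) % k, Nat.mod_lt _ hk, heq⟩
  · exfalso
    obtain ⟨j2, hj2, hg2⟩ := h2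
    rw [← hg2, rotFun_apply g k hinj hj2, rotFun_fix g k h1] at heq
    exact h1 ⟨(j2 + 1) % k, Nat.mod_lt _ hk, heq.symm⟩
  · rwa [rotFun_fix g k h1, rotFun_fix g k h2] at heq


def EF (v : Fin m → Fin m → ℝ) (ρ b : Fin m → ℝ) (q : Fin m → ℝ)
    (ν : Equiv.Perm (Fin m)) : Prop :=
  ∀ i c, U v ρ b i (q c) c ≤ U v ρ b i (q (ν i)) (ν i)

noncomputable def Phi (ρ b : Fin m → ℝ) (q : Fin m → ℝ) (ν : Equiv.Perm (Fin m)) : ℝ :=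
  ∏ i, sl ρ b i (q (ν i))

def Tight (v : Fin m → Fin m → ℝ) (ρ b q : Fin m → ℝ) (ν : Equiv.Perm (Fin m)) (x y : Fin m) : Prop :=
  U v ρ b (ν.symm x) (q x) x ≤ U v ρ b (ν.symm x) (q y) y

noncomputable def ratio (ρ b q : Fin m → ℝ) (ν : Equiv.Perm (Fin m)) (x y : Fin m) : ℝ :=
  sl ρ b (ν.symm x) (q x) / sl ρ b (ν.symm x) (q y)

section Cycle

variable (v : Fin m → Fin m → ℝ) (ρ b q : Fin m → ℝ) (ν : Equiv.Perm (Fin m))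

lemma ratio_pos (hρ0 : ∀ i, 0 ≤ ρ i) (x y : Fin m) : 0 < ratio ρ b q ν x y :=
  div_pos (sl_pos ρ b hρ0 _ _) (sl_pos ρ b hρ0 _ _)

lemma ratio_le_K (ρbar : ℝ) (hρ0 : ∀ i, 0 ≤ ρ i) (hρbar : ∀ i, ρ i ≤ ρbar) (x y : Fin m) :
    ratio ρ b q ν x y ≤ 1 + ρbar := by
  rw [ratio, div_le_iff₀ (sl_pos ρ b hρ0 _ _)]
  calc sl ρ b (ν.symm x) (q x) ≤ 1 + ρbar := sl_le_K ρ b ρbar hρ0 hρbar _ _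
    _ = (1 + ρbar) * 1 := by ring
    _ ≤ (1 + ρbar) * sl ρ b (ν.symm x) (q y) := by
        have h1 : (0:ℝ) ≤ 1 + ρbar := by linarith [le_trans (hρ0 x) (hρbar x)]
        exact mul_le_mul_of_nonneg_left (sl_ge_one ρ b hρ0 _ _) h1

lemma cycle_prod_le_one (hρ0 : ∀ i, 0 ≤ ρ i)
    (hEF : EF v ρ b q ν)
    (hmin : ∀ ν', EF v ρ b q ν' → Phi ρ b q ν ≤ Phi ρ b q ν')
    (k : ℕ) (hk : 0 < k) (g : ℕ → Fin m)
    (hinj : ∀ j1 < k, ∀ j2 < k, g j1 = g j2 → j1 = j2)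
    (hchain : ∀ j, j + 1 < k → Tight v ρ b q ν (g j) (g (j+1)))
    (hwrap : Tight v ρ b q ν (g (k-1)) (g 0)) :
    ∏ j ∈ Finset.range k, ratio ρ b q ν (g j) (g ((j+1) % k)) ≤ 1 := by
  classical
  -- each step is tight
  have hstep : ∀ j, j < k → Tight v ρ b q ν (g j) (g ((j+1) % k)) := by
    intro j hj
    by_cases h : j + 1 < k
    · rw [Nat.mod_eq_of_lt h]; exact hchain j h
    · have hjk : j + 1 = k := le_antisymm hj (not_lt.mp h)
      have h0 : (j + 1) % k = 0 := by rw [hjk, Nat.mod_self]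
      have hj1 : j = k - 1 := by omega
      rw [h0, hj1]; exact hwrap
  -- the rotation permutation
  have hbij : Function.Bijective (rotFun g k) :=
    Finite.injective_iff_bijective.mp (rotFun_injective g k hk hinj)
  set e : Equiv.Perm (Fin m) := Equiv.ofBijective _ hbij with he_def
  have he1 : ∀ j, j < k → e (g j) = g ((j+1) % k) := by
    intro j hj
    show rotFun g k (g j) = _
    exact rotFun_apply g k hinj hj
  have he2 : ∀ x : Fin m, (¬∃ j, j < k ∧ g j = x) → e x = x := by
    intro x hx
    show rotFun g k x = x
    exact rotFun_fix g k hx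
  -- the rotated assignment is envy-free
  set ν' : Equiv.Perm (Fin m) := ν.trans e with hν'_def
  have hν' : ∀ i, ν' i = e (ν i) := fun i => rfl
  have hEF' : EF v ρ b q ν' := by
    intro i c
    by_cases h : ∃ j, j < k ∧ g j = ν i
    · obtain ⟨j, hj, hg⟩ := h
      have ht := hstep j hj
      rw [Tight, hg, Equiv.symm_apply_apply] at ht
      calc U v ρ b i (q c) c ≤ U v ρ b i (q (ν i)) (ν i) := hEF i c
        _ ≤ U v ρ b i (q (g ((j+1) % k))) (g ((j+1) % k)) := ht
        _ = U v ρ b i (q (ν' i)) (ν' i) := by rw [hν' i, ← hg, he1 j hj]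
    · rw [hν' i, he2 _ h]; exact hEF i c
  have hΦ := hmin ν' hEF'
  -- rewrite both sides as products over rooms
  set F : Fin m → ℝ := fun x => sl ρ b (ν.symm x) (q x) with hF_def
  set G : Fin m → ℝ := fun x => sl ρ b (ν.symm x) (q (e x)) with hG_def
  have hFpos : ∀ x, 0 < F x := fun x => sl_pos ρ b hρ0 _ _
  have hGpos : ∀ x, 0 < G x := fun x => sl_pos ρ b hρ0 _ _
  have hPhi1 : Phi ρ b q ν = ∏ x, F x := by
    rw [Phi, ← Equiv.prod_comp ν F]
    apply Finset.prod_congr rfl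
    intro i _
    simp [hF_def, Equiv.symm_apply_apply]
  have hPhi2 : Phi ρ b q ν' = ∏ x, G x := by
    rw [Phi, ← Equiv.prod_comp ν G]
    apply Finset.prod_congr rfl
    intro i _
    simp [hG_def, hν' i, Equiv.symm_apply_apply]
  rw [hPhi1, hPhi2] at hΦ
  set Im : Finset (Fin m) := (Finset.range k).image g with hIm_def
  have hoff : ∀ x ∈ Imᶜ, F x = G x := by
    intro x hx
    have hnx : ¬∃ j, j < k ∧ g j = x := by
      intro ⟨j, hj, hg⟩
      rw [Finset.mem_compl] at hx
      exact hx (Finset.mem_image.mpr ⟨j, Finset.mem_range.mpr hj, hg⟩)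
    rw [hG_def]
    simp only
    rw [he2 x hnx]
  have hsplitF := Finset.prod_mul_prod_compl Im F
  have hsplitG := Finset.prod_mul_prod_compl Im G
  have hcpos : 0 < ∏ x ∈ Imᶜ, F x := Finset.prod_pos (fun x _ => hFpos x)
  have hoffeq : ∏ x ∈ Imᶜ, F x = ∏ x ∈ Imᶜ, G x := Finset.prod_congr rfl hoff
  have hIm_le : ∏ x ∈ Im, F x ≤ ∏ x ∈ Im, G x := by
    have h1 : (∏ x ∈ Im, F x) * ∏ x ∈ Imᶜ, F x ≤ (∏ x ∈ Im, G x) * ∏ x ∈ Imᶜ, F x := by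
      rw [hsplitF]
      calc ∏ x, F x ≤ ∏ x, G x := hΦ
        _ = (∏ x ∈ Im, G x) * ∏ x ∈ Imᶜ, G x := hsplitG.symm
        _ = (∏ x ∈ Im, G x) * ∏ x ∈ Imᶜ, F x := by rw [hoffeq]
    exact le_of_mul_le_mul_right h1 hcpos
  -- conclude
  have hrat : ∀ x ∈ Im, ratio ρ b q ν x (e x) = F x / G x := fun x _ => rfl
  have himg : ∏ j ∈ Finset.range k, ratio ρ b q ν (g j) (g ((j+1) % k))
      = ∏ x ∈ Im, ratio ρ b q ν x (e x) := by
    rw [hIm_def, Finset.prod_image]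
    · apply Finset.prod_congr rfl
      intro j hj
      rw [he1 j (Finset.mem_range.mp hj)]
    · intro x hx y hy hxy
      exact hinj x (Finset.mem_range.mp hx) y (Finset.mem_range.mp hy) hxy
  rw [himg, Finset.prod_congr rfl hrat, Finset.prod_div_distrib]
  rw [div_le_one (Finset.prod_pos (fun x _ => hGpos x))]
  exact hIm_le

end Cycle

section Paths

variable (v : Fin m → Fin m → ℝ) (ρ b q : Fin m → ℝ) (ν : Equiv.Perm (Fin m)) (a : Fin m)

def IsPath (k : ℕ) (g : ℕ → Fin m) (x : Fin m) : Prop :=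
  0 < k ∧ (∀ j1 < k, ∀ j2 < k, g j1 = g j2 → j1 = j2) ∧ g 0 = a ∧ g (k-1) = x ∧
    ∀ j, j + 1 < k → Tight v ρ b q ν (g j) (g (j+1))

noncomputable def pProd (k : ℕ) (g : ℕ → Fin m) : ℝ :=
  ∏ j ∈ Finset.range (k-1), ratio ρ b q ν (g j) (g (j+1))

def PS (x : Fin m) : Set ℝ :=
  {p | ∃ k g, IsPath v ρ b q ν a k g x ∧ p = pProd ρ b q ν k g}

noncomputable def dd (x : Fin m) : ℝ := sSup (PS v ρ b q ν a x)

variable (ρbar : ℝ)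

lemma PS_bounds (hρ0 : ∀ i, 0 ≤ ρ i) (hρbar : ∀ i, ρ i ≤ ρbar) (x : Fin m)
    (p : ℝ) (hp : p ∈ PS v ρ b q ν a x) : 0 < p ∧ p ≤ (1 + ρbar) ^ (m - 1) := by
  obtain ⟨k, g, hpath, rfl⟩ := hp
  obtain ⟨hk, hinj, hg0, hgl, hchain⟩ := hpath
  have hKm : 0 < m := a.pos
  have hkm : k ≤ m := by
    have : (Finset.range k).card ≤ (Finset.univ : Finset (Fin m)).card := by
      apply Finset.card_le_card_of_injOn g (fun _ _ => Finset.mem_univ _)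
      intro j1 h1 j2 h2 hgg
      exact hinj j1 (Finset.mem_range.mp h1) j2 (Finset.mem_range.mp h2) hgg
    simpa using this
  constructor
  · exact Finset.prod_pos (fun j _ => ratio_pos ρ b q ν hρ0 _ _)
  · calc pProd ρ b q ν k g ≤ ∏ _j ∈ Finset.range (k-1), (1 + ρbar) := by
          apply Finset.prod_le_prod (fun j _ => (ratio_pos ρ b q ν hρ0 _ _).le)
            (fun j _ => ratio_le_K ρ b q ν ρbar hρ0 hρbar _ _)
      _ = (1 + ρbar) ^ (k - 1) := by rw [Finset.prod_const, Finset.card_range]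
      _ ≤ (1 + ρbar) ^ (m - 1) := by
          apply pow_le_pow_right₀ (by linarith [le_trans (hρ0 x) (hρbar x)]) (by omega)

lemma PS_bddAbove (hρ0 : ∀ i, 0 ≤ ρ i) (hρbar : ∀ i, ρ i ≤ ρbar) (x : Fin m) :
    BddAbove (PS v ρ b q ν a x) :=
  ⟨(1 + ρbar) ^ (m - 1), fun p hp => (PS_bounds v ρ b q ν a ρbar hρ0 hρbar x p hp).2⟩

lemma dd_nonneg (hρ0 : ∀ i, 0 ≤ ρ i) (hρbar : ∀ i, ρ i ≤ ρbar) (x : Fin m) :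
    0 ≤ dd v ρ b q ν a x :=
  Real.sSup_nonneg (fun p hp => (PS_bounds v ρ b q ν a ρbar hρ0 hρbar x p hp).1.le)

lemma dd_le (hρ0 : ∀ i, 0 ≤ ρ i) (hρbar : ∀ i, ρ i ≤ ρbar) (x : Fin m) :
    dd v ρ b q ν a x ≤ (1 + ρbar) ^ (m - 1) := by
  apply Real.sSup_le (fun p hp => (PS_bounds v ρ b q ν a ρbar hρ0 hρbar x p hp).2)
  exact pow_nonneg (by linarith [le_trans (hρ0 x) (hρbar x)]) _

lemma one_mem_PS : (1 : ℝ) ∈ PS v ρ b q ν a a := by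
  refine ⟨1, fun _ => a, ⟨one_pos, ?_, rfl, rfl, ?_⟩, ?_⟩
  · intro j1 h1 j2 h2 _; omega
  · intro j hj; omega
  · simp [pProd]

lemma dd_a_ge_one (hρ0 : ∀ i, 0 ≤ ρ i) (hρbar : ∀ i, ρ i ≤ ρbar) :
    1 ≤ dd v ρ b q ν a a :=
  le_csSup (PS_bddAbove v ρ b q ν a ρbar hρ0 hρbar a) (one_mem_PS v ρ b q ν a)

/-- The edge lemma: tight edges propagate the rates. -/
lemma edge_lemma (hρ0 : ∀ i, 0 ≤ ρ i) (hρbar : ∀ i, ρ i ≤ ρbar)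
    (hEF : EF v ρ b q ν)
    (hmin : ∀ ν', EF v ρ b q ν' → Phi ρ b q ν ≤ Phi ρ b q ν')
    {x y : Fin m} (ht : Tight v ρ b q ν x y)
    (hne : (PS v ρ b q ν a x).Nonempty) :
    (PS v ρ b q ν a y).Nonempty ∧
      sl ρ b (ν.symm x) (q x) * dd v ρ b q ν a x
        ≤ sl ρ b (ν.symm x) (q y) * dd v ρ b q ν a y := by
  classical
  have hstep : ∀ p ∈ PS v ρ b q ν a x,
      ∃ p' ∈ PS v ρ b q ν a y, p * ratio ρ b q ν x y ≤ p' := by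
    rintro p ⟨k, g, ⟨hk, hinj, hg0, hgl, hchain⟩, rfl⟩
    by_cases hy : ∃ j, j < k ∧ g j = y
    · obtain ⟨j₀, hj₀, hgj₀⟩ := hy
      -- prefix path to y
      have hpre : IsPath v ρ b q ν a (j₀ + 1) g y := by
        refine ⟨Nat.succ_pos _, ?_, hg0, by simpa using hgj₀, ?_⟩
        · intro j1 h1 j2 h2 hgg; exact hinj j1 (by omega) j2 (by omega) hgg
        · intro j hj; exact hchain j (by omega)
      set π₁ := pProd ρ b q ν (j₀ + 1) g with hπ₁
      refine ⟨π₁, ⟨j₀ + 1, g, hpre, rfl⟩, ?_⟩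
      -- the cycle from y through x back to y
      set kc := k - j₀ with hkc
      have hkc0 : 0 < kc := by omega
      set h : ℕ → Fin m := fun j => g (j₀ + j) with hh
      obtain ⟨kc', hkc'⟩ : ∃ kc', kc = kc' + 1 := ⟨kc - 1, by omega⟩
      have hcyc : ∏ j ∈ Finset.range kc, ratio ρ b q ν (h j) (h ((j+1) % kc)) ≤ 1 := by
        apply cycle_prod_le_one v ρ b q ν hρ0 hEF hmin kc hkc0 h
        · intro j1 h1 j2 h2 hgg
          have := hinj (j₀ + j1) (by omega) (j₀ + j2) (by omega) hgg
          omega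
        · intro j hj
          have : j₀ + j + 1 < k := by omega
          have h2 : h (j + 1) = g (j₀ + j + 1) := by rw [hh]; ring_nf
          rw [hh] at *
          simp only at *
          rw [show j₀ + (j + 1) = j₀ + j + 1 by ring]
          exact hchain (j₀ + j) this
        · have h1 : h (kc - 1) = x := by
            rw [hh]; simp only; rw [show j₀ + (kc - 1) = k - 1 by omega]; exact hgl
          have h2 : h 0 = y := by rw [hh]; simpa using hgj₀
          rw [h1, h2]; exact ht
      -- split the cycle product
      have hsplit : ∏ j ∈ Finset.range kc, ratio ρ b q ν (h j) (h ((j+1) % kc))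
          = (∏ j ∈ Finset.range kc', ratio ρ b q ν (h j) (h (j+1)))
            * ratio ρ b q ν x y := by
        rw [hkc', Finset.prod_range_succ]
        congr 1
        · apply Finset.prod_congr rfl
          intro j hj
          have hj' := Finset.mem_range.mp hj
          rw [Nat.mod_eq_of_lt (by omega)]
        · have h1 : h kc' = x := by
            rw [hh]; simp only; rw [show j₀ + kc' = k - 1 by omega]; exact hgl
          have h2 : h ((kc' + 1) % (kc' + 1)) = y := by
            rw [Nat.mod_self, hh]; simpa using hgj₀
          rw [h1, h2]
      -- the full path product splits as π₁ * π₂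
      have hπsplit : pProd ρ b q ν k g
          = π₁ * ∏ j ∈ Finset.Ico j₀ (k - 1), ratio ρ b q ν (g j) (g (j+1)) := by
        rw [hπ₁, pProd, pProd]
        simp only [Nat.add_sub_cancel, Finset.range_eq_Ico]
        rw [← Finset.prod_Ico_consecutive _ (Nat.zero_le j₀) (by omega : j₀ ≤ k - 1)]
      -- identify π₂ with the cycle part
      have hπ₂ : ∏ j ∈ Finset.Ico j₀ (k - 1), ratio ρ b q ν (g j) (g (j+1))
          = ∏ j ∈ Finset.range kc', ratio ρ b q ν (h j) (h (j+1)) := by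
        rw [Finset.prod_Ico_eq_prod_range]
        have : k - 1 - j₀ = kc' := by omega
        rw [this]
        apply Finset.prod_congr rfl
        intro j hj
        rw [hh]
        simp only
        rw [show j₀ + (j + 1) = j₀ + j + 1 by ring]
      have hπ₁pos : 0 < π₁ :=
        (PS_bounds v ρ b q ν a ρbar hρ0 hρbar y π₁ ⟨j₀ + 1, g, hpre, rfl⟩).1
      rw [hπsplit, hπ₂]
      calc π₁ * (∏ j ∈ Finset.range kc', ratio ρ b q ν (h j) (h (j+1)))
            * ratio ρ b q ν x y
          = π₁ * ((∏ j ∈ Finset.range kc', ratio ρ b q ν (h j) (h (j+1)))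
            * ratio ρ b q ν x y) := by ring
        _ ≤ π₁ * 1 := by
            apply mul_le_mul_of_nonneg_left _ hπ₁pos.le
            rw [← hsplit]; exact hcyc
        _ = π₁ := mul_one _
    · -- extend the path by the edge x → y
      push_neg at hy
      set g' : ℕ → Fin m := fun j => if j < k then g j else y with hg'
      have hext : IsPath v ρ b q ν a (k + 1) g' y := by
        refine ⟨Nat.succ_pos _, ?_, ?_, ?_, ?_⟩
        · intro j1 h1 j2 h2 hgg
          rw [hg'] at hgg
          simp only at hgg
          by_cases c1 : j1 < k <;> by_cases c2 : j2 < k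
          · rw [if_pos c1, if_pos c2] at hgg; exact hinj j1 c1 j2 c2 hgg
          · rw [if_pos c1, if_neg c2] at hgg; exact absurd hgg (hy j1 c1)
          · rw [if_neg c1, if_pos c2] at hgg; exact absurd hgg.symm (hy j2 c2)
          · omega
        · rw [hg']; simp only; rw [if_pos hk]; exact hg0
        · rw [hg']; simp
        · intro j hj
          rw [hg']
          simp only
          by_cases c : j + 1 < k
          · rw [if_pos c, if_pos (by omega)]; exact hchain j c
          · have hj1 : j + 1 = k := by omega
            rw [if_pos (by omega), if_neg (by omega)]
            have : g j = x := by rw [show j = k - 1 by omega]; exact hgl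
            rw [this]; exact ht
      refine ⟨pProd ρ b q ν (k+1) g', ⟨k + 1, g', hext, rfl⟩, le_of_eq ?_⟩
      obtain ⟨k', rfl⟩ : ∃ k', k = k' + 1 := ⟨k - 1, by omega⟩
      rw [pProd, pProd]
      simp only [Nat.add_sub_cancel]
      rw [Finset.prod_range_succ]
      have hx' : g k' = x := by simpa using hgl
      congr 1
      · apply Finset.prod_congr rfl
        intro j hj
        have hj' := Finset.mem_range.mp hj
        rw [hg']
        simp only
        rw [if_pos (by omega), if_pos (by omega)]
      · rw [hg']
        simp only
        rw [if_pos (by omega), if_neg (by omega), hx']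
  -- now conclude
  obtain ⟨p₀, hp₀⟩ := hne
  obtain ⟨p₀', hp₀', _⟩ := hstep p₀ hp₀
  refine ⟨⟨p₀', hp₀'⟩, ?_⟩
  have hrpos : 0 < ratio ρ b q ν x y := ratio_pos ρ b q ν hρ0 x y
  have hdy : 0 ≤ dd v ρ b q ν a y := dd_nonneg v ρ b q ν a ρbar hρ0 hρbar y
  have hdxr : dd v ρ b q ν a x ≤ dd v ρ b q ν a y / ratio ρ b q ν x y := by
    apply Real.sSup_le _ (div_nonneg hdy hrpos.le)
    intro p hp
    obtain ⟨p', hp', hle⟩ := hstep p hp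
    have : p' ≤ dd v ρ b q ν a y :=
      le_csSup (PS_bddAbove v ρ b q ν a ρbar hρ0 hρbar y) hp'
    rw [le_div_iff₀ hrpos]
    linarith
  have h2 : dd v ρ b q ν a x * ratio ρ b q ν x y ≤ dd v ρ b q ν a y := by
    rw [← le_div_iff₀ hrpos]; exact hdxr
  rw [ratio] at h2
  have hslypos : 0 < sl ρ b (ν.symm x) (q y) := sl_pos ρ b hρ0 _ _
  calc sl ρ b (ν.symm x) (q x) * dd v ρ b q ν a x
      = (dd v ρ b q ν a x * (sl ρ b (ν.symm x) (q x) / sl ρ b (ν.symm x) (q y)))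
        * sl ρ b (ν.symm x) (q y) := by field_simp
    _ ≤ dd v ρ b q ν a y * sl ρ b (ν.symm x) (q y) :=
        mul_le_mul_of_nonneg_right h2 hslypos.le
    _ = sl ρ b (ν.symm x) (q y) * dd v ρ b q ν a y := by ring

end Paths

set_option maxHeartbeats 2000000 in
/-- Local perturbation: from any envy-free allocation, the total rent can be
increased a little with room `a` capturing a definite share of the increase. -/
lemma local_perturb (v : Fin m → Fin m → ℝ) (ρ b : Fin m → ℝ) (ρbar : ℝ)
    (hρ0 : ∀ i, 0 ≤ ρ i) (hρbar : ∀ i, ρ i ≤ ρbar)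
    (a : Fin m) (q : Fin m → ℝ) (ν₀ : Equiv.Perm (Fin m)) (hEF₀ : EF v ρ b q ν₀)
    (δ₀ : ℝ) (hδ₀ : 0 < δ₀) :
    ∃ (q' : Fin m → ℝ) (ν' : Equiv.Perm (Fin m)), EF v ρ b q' ν' ∧
      (∀ c, q c ≤ q' c) ∧
      0 < ∑ c, (q' c - q c) ∧ (∑ c, (q' c - q c)) ≤ δ₀ ∧
      ∑ c, (q' c - q c) ≤ ((m : ℝ) * (1 + ρbar) ^ (m - 1)) * (q' a - q a) := by
  classical
  have hρb : 0 ≤ ρbar := le_trans (hρ0 a) (hρbar a)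
  set K : ℝ := 1 + ρbar with hK_def
  have hK1 : 1 ≤ K := by linarith
  set D : ℝ := K ^ (m - 1) with hD_def
  have hD1 : 1 ≤ D := one_le_pow₀ hK1
  have hDpos : 0 < D := lt_of_lt_of_le one_pos hD1
  have hm0 : 0 < m := a.pos
  -- choose a Φ-minimal envy-free assignment
  set P : Finset (Equiv.Perm (Fin m)) := Finset.univ.filter (fun ν' => EF v ρ b q ν') with hP
  have hPne : P.Nonempty := ⟨ν₀, by simp [hP, hEF₀]⟩
  obtain ⟨ν, hνP, hνmin⟩ := P.exists_min_image (Phi ρ b q) hPne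
  have hEF : EF v ρ b q ν := (Finset.mem_filter.mp hνP).2
  have hmin : ∀ ν', EF v ρ b q ν' → Phi ρ b q ν ≤ Phi ρ b q ν' := by
    intro ν' h'; exact hνmin ν' (by simp [hP, h'])
  set d : Fin m → ℝ := dd v ρ b q ν a with hd_def
  have hd0 : ∀ x, 0 ≤ d x := fun x => dd_nonneg v ρ b q ν a ρbar hρ0 hρbar x
  have hdD : ∀ x, d x ≤ D := fun x => dd_le v ρ b q ν a ρbar hρ0 hρbar x
  have hda : 1 ≤ d a := dd_a_ge_one v ρ b q ν a ρbar hρ0 hρbar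
  -- choice of the step size γ
  set Fk : Finset (Fin m × Fin m) :=
    Finset.univ.filter (fun p => q p.2 < b p.1) with hFk
  set γ₁ : ℝ := if h : Fk.Nonempty then (Fk.inf' h fun p => b p.1 - q p.2) / D else 1 with hγ₁
  have hγ₁pos : 0 < γ₁ := by
    rw [hγ₁]
    split
    · rename_i h
      apply div_pos _ hDpos
      obtain ⟨p, hp, hple⟩ := Finset.exists_mem_eq_inf' h (fun p => b p.1 - q p.2)
      rw [hple]
      have := (Finset.mem_filter.mp hp).2
      linarith
    · exact one_pos
  set Fs : Finset (Fin m × Fin m) :=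
    Finset.univ.filter (fun p => U v ρ b p.1 (q p.2) p.2 < U v ρ b p.1 (q (ν p.1)) (ν p.1))
    with hFs
  set γ₂ : ℝ := if h : Fs.Nonempty then
      (Fs.inf' h fun p => U v ρ b p.1 (q (ν p.1)) (ν p.1) - U v ρ b p.1 (q p.2) p.2) / (K * D)
    else 1 with hγ₂
  have hγ₂pos : 0 < γ₂ := by
    rw [hγ₂]
    split
    · rename_i h
      apply div_pos _ (by positivity)
      obtain ⟨p, hp, hple⟩ := Finset.exists_mem_eq_inf' h
        (fun p => U v ρ b p.1 (q (ν p.1)) (ν p.1) - U v ρ b p.1 (q p.2) p.2)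
      rw [hple]
      have := (Finset.mem_filter.mp hp).2
      linarith
    · exact one_pos
  set γ₃ : ℝ := δ₀ / (m * D) with hγ₃
  have hγ₃pos : 0 < γ₃ := by
    apply div_pos hδ₀
    positivity
  set γ : ℝ := min γ₁ (min γ₂ γ₃) with hγ
  have hγpos : 0 < γ := lt_min hγ₁pos (lt_min hγ₂pos hγ₃pos)
  -- no kink is crossed
  have hkink : ∀ (i z : Fin m), q z < b i → q z + γ * d z ≤ b i := by
    intro i z hqz
    have hmem : (i, z) ∈ Fk := by simp [hFk, hqz]
    have hFkne : Fk.Nonempty := ⟨_, hmem⟩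
    have hinf : Fk.inf' hFkne (fun p => b p.1 - q p.2) ≤ b i - q z :=
      Finset.inf'_le _ hmem
    have h1 : γ * d z ≤ γ₁ * D := by
      apply mul_le_mul (min_le_left _ _) (hdD z) (hd0 z) hγ₁pos.le
    have h2 : γ₁ * D = Fk.inf' hFkne (fun p => b p.1 - q p.2) := by
      rw [hγ₁, dif_pos hFkne]
      field_simp
    linarith
  -- exact utility decrement everywhere
  have hincr : ∀ (i z : Fin m),
      ff ρ b i (q z + γ * d z) = ff ρ b i (q z) + sl ρ b i (q z) * (γ * d z) :=
    fun i z => ff_incr_exact ρ b i (mul_nonneg hγpos.le (hd0 z)) (hkink i z)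
  set q' : Fin m → ℝ := fun c => q c + γ * d c with hq'
  have hU' : ∀ (i z : Fin m),
      U v ρ b i (q' z) z = U v ρ b i (q z) z - sl ρ b i (q z) * (γ * d z) := by
    intro i z
    rw [hq']
    simp only [U]
    rw [hincr i z]
    ring
  refine ⟨q', ν, ?_, ?_, ?_, ?_, ?_⟩
  · -- envy-freeness is preserved
    intro i c
    rw [hU', hU']
    set x : Fin m := ν i with hx
    rcases eq_or_lt_of_le (hEF i c) with htight | hslack
    · -- tight pair
      have hxc : sl ρ b i (q x) * d x ≤ sl ρ b i (q c) * d c := by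
        by_cases hne : (PS v ρ b q ν a x).Nonempty
        · have hT : Tight v ρ b q ν x c := by
            rw [Tight, hx, Equiv.symm_apply_apply, ← hx]
            exact le_of_eq htight.symm
          have := (edge_lemma v ρ b q ν a ρbar hρ0 hρbar hEF hmin hT hne).2
          rwa [hx, Equiv.symm_apply_apply, ← hx] at this
        · have hdx : d x = 0 := by
            rw [hd_def, dd, Set.not_nonempty_iff_eq_empty.mp hne, Real.sSup_empty]
          rw [hdx, mul_zero]
          exact mul_nonneg (sl_pos ρ b hρ0 i (q c)).le (hd0 c)
      have h1 : sl ρ b i (q x) * (γ * d x) ≤ sl ρ b i (q c) * (γ * d c) := by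
        have := mul_le_mul_of_nonneg_left hxc hγpos.le
        nlinarith [hxc, hγpos.le]
      rw [htight]
      linarith
    · -- slack pair
      have hmem : (i, c) ∈ Fs := by simp [hFs, hslack]
      have hFsne : Fs.Nonempty := ⟨_, hmem⟩
      have hinf : Fs.inf' hFsne (fun p => U v ρ b p.1 (q (ν p.1)) (ν p.1) - U v ρ b p.1 (q p.2) p.2)
          ≤ U v ρ b i (q x) x - U v ρ b i (q c) c := Finset.inf'_le _ hmem
      have h2 : γ₂ * (K * D) = Fs.inf' hFsne
          (fun p => U v ρ b p.1 (q (ν p.1)) (ν p.1) - U v ρ b p.1 (q p.2) p.2) := by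
        rw [hγ₂, dif_pos hFsne]
        field_simp
      have h3 : sl ρ b i (q x) * (γ * d x) ≤ γ₂ * (K * D) := by
        have hsl : sl ρ b i (q x) ≤ K := sl_le_K ρ b ρbar hρ0 hρbar i (q x)
        have hγγ₂ : γ ≤ γ₂ := le_trans (min_le_right _ _) (min_le_left _ _)
        have hdx := hdD x
        have h0x := hd0 x
        have hslpos := (sl_pos ρ b hρ0 i (q x)).le
        have hK0 : (0:ℝ) ≤ K := by linarith
        have e1 : γ * d x ≤ γ₂ * D := by
          apply mul_le_mul hγγ₂ hdx h0x hγ₂pos.le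
        calc sl ρ b i (q x) * (γ * d x) ≤ K * (γ * d x) :=
              mul_le_mul_of_nonneg_right hsl (mul_nonneg hγpos.le h0x)
          _ ≤ K * (γ₂ * D) := mul_le_mul_of_nonneg_left e1 hK0
          _ = γ₂ * (K * D) := by ring
      have h4 : 0 ≤ sl ρ b i (q c) * (γ * d c) := by
        have := (sl_pos ρ b hρ0 i (q c)).le
        have := hd0 c
        positivity
      linarith
  · intro c
    rw [hq']
    simp only
    nlinarith [hd0 c, hγpos.le]
  · have : ∑ c, (q' c - q c) = γ * ∑ c, d c := by
      rw [hq', Finset.mul_sum]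
      apply Finset.sum_congr rfl
      intro c _
      ring
    rw [this]
    apply mul_pos hγpos
    have h1 : d a ≤ ∑ c, d c := Finset.single_le_sum (fun c _ => hd0 c) (Finset.mem_univ a)
    linarith
  · have hsum : ∑ c, (q' c - q c) = γ * ∑ c, d c := by
      rw [hq', Finset.mul_sum]
      exact Finset.sum_congr rfl (fun c _ => by ring)
    rw [hsum]
    have h1 : ∑ c, d c ≤ (m : ℝ) * D := by
      calc ∑ c, d c ≤ ∑ _c : Fin m, D := Finset.sum_le_sum (fun c _ => hdD c)
        _ = (m : ℝ) * D := by rw [Finset.sum_const, Finset.card_univ, Fintype.card_fin,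
              nsmul_eq_mul]
    have hγγ₃ : γ ≤ γ₃ := le_trans (min_le_right _ _) (min_le_right _ _)
    calc γ * ∑ c, d c ≤ γ * ((m : ℝ) * D) := by nlinarith
      _ ≤ γ₃ * ((m : ℝ) * D) :=
            mul_le_mul_of_nonneg_right hγγ₃ (mul_nonneg (Nat.cast_nonneg m) hDpos.le)
      _ = δ₀ := by
          rw [hγ₃]
          field_simp
  · have hsum : ∑ c, (q' c - q c) = γ * ∑ c, d c := by
      rw [hq', Finset.mul_sum]
      exact Finset.sum_congr rfl (fun c _ => by ring)
    have hqa : q' a - q a = γ * d a := by rw [hq']; ring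
    rw [hsum, hqa]
    have h1 : ∑ c, d c ≤ (m : ℝ) * D := by
      calc ∑ c, d c ≤ ∑ _c : Fin m, D := Finset.sum_le_sum (fun c _ => hdD c)
        _ = (m : ℝ) * D := by rw [Finset.sum_const, Finset.card_univ, Fintype.card_fin,
              nsmul_eq_mul]
    have hmD : (1:ℝ) ≤ (m : ℝ) * D := by
      have : (1:ℝ) ≤ (m : ℝ) := by exact_mod_cast hm0
      nlinarith
    calc γ * ∑ c, d c ≤ γ * ((m : ℝ) * D) := by nlinarith
      _ = ((m : ℝ) * D) * (γ * 1) := by ring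
      _ ≤ ((m : ℝ) * D) * (γ * d a) := by
            apply mul_le_mul_of_nonneg_left _ (by nlinarith)
            nlinarith

lemma continuous_U (v : Fin m → Fin m → ℝ) (ρ b : Fin m → ℝ) (i c : Fin m) :
    Continuous (fun x : Fin m → ℝ => U v ρ b i (x c) c) := by
  apply continuous_const.sub
  unfold ff
  apply Continuous.add (continuous_apply c)
  apply continuous_const.mul
  exact continuous_const.max ((continuous_apply c).sub continuous_const)

set_option maxHeartbeats 1000000 in
/-- From an envy-free allocation with total rent `l`, produce one with total
rent `l + ε` where room `a`'s price has increased by at least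
`ε / (m (1+ρbar)^(m-1))`. -/
lemma exists_max_EF (v : Fin m → Fin m → ℝ) (ρ b : Fin m → ℝ) (ρbar : ℝ)
    (hρ0 : ∀ i, 0 ≤ ρ i) (hρbar : ∀ i, ρ i ≤ ρbar)
    (a : Fin m) (t : Fin m → ℝ) (σ : Equiv.Perm (Fin m)) (hEFt : EF v ρ b t σ)
    (l ε : ℝ) (hl : ∑ c, t c = l) (hε : 0 < ε) :
    ∃ (x : Fin m → ℝ) (ν : Equiv.Perm (Fin m)), EF v ρ b x ν ∧ (∑ c, x c = l + ε) ∧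
      ε ≤ ((m : ℝ) * (1 + ρbar) ^ (m - 1)) * (x a - t a) := by
  classical
  set C : ℝ := (m : ℝ) * (1 + ρbar) ^ (m - 1) with hC
  set S : Set (Fin m → ℝ) := {x | (∃ ν, EF v ρ b x ν) ∧ (∀ c, t c ≤ x c) ∧
    (∑ c, x c) ≤ l + ε ∧ (∑ c, x c) - l ≤ C * (x a - t a)} with hS
  have hSsub : S ⊆ Set.Icc t (fun c => t c + ε) := by
    rintro x ⟨_, hge, hsum, _⟩
    constructor
    · intro c; exact hge c
    · intro c
      have h1 : x c - t c ≤ ∑ z, (x z - t z) :=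
        Finset.single_le_sum (f := fun z => x z - t z)
          (fun z _ => by linarith [hge z]) (Finset.mem_univ c)
      have h2 : ∑ z, (x z - t z) = (∑ z, x z) - l := by
        rw [Finset.sum_sub_distrib, hl]
      simp only
      linarith
  have hSclosed : IsClosed S := by
    have h1 : IsClosed {x : Fin m → ℝ | ∃ ν, EF v ρ b x ν} := by
      have he : {x : Fin m → ℝ | ∃ ν, EF v ρ b x ν} = ⋃ ν, {x | EF v ρ b x ν} := by
        ext x; simp
      rw [he]
      apply isClosed_iUnion_of_finite
      intro ν
      have he2 : {x : Fin m → ℝ | EF v ρ b x ν} =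
          ⋂ i, ⋂ c, {x | U v ρ b i (x c) c ≤ U v ρ b i (x (ν i)) (ν i)} := by
        ext x; simp [EF]
      rw [he2]
      apply isClosed_iInter; intro i; apply isClosed_iInter; intro c
      exact isClosed_le (continuous_U v ρ b i c) (continuous_U v ρ b i (ν i))
    have h2 : IsClosed {x : Fin m → ℝ | ∀ c, t c ≤ x c} := by
      have he : {x : Fin m → ℝ | ∀ c, t c ≤ x c} = ⋂ c, {x | t c ≤ x c} := by ext x; simp
      rw [he]
      apply isClosed_iInter; intro c
      exact isClosed_le continuous_const (continuous_apply c)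
    have hcs : Continuous (fun x : Fin m → ℝ => ∑ c, x c) :=
      continuous_finset_sum _ (fun c _ => continuous_apply c)
    have h3 : IsClosed {x : Fin m → ℝ | (∑ c, x c) ≤ l + ε} :=
      isClosed_le hcs continuous_const
    have h4 : IsClosed {x : Fin m → ℝ | (∑ c, x c) - l ≤ C * (x a - t a)} :=
      isClosed_le (hcs.sub continuous_const)
        (continuous_const.mul ((continuous_apply a).sub continuous_const))
    have hSeq : S = {x : Fin m → ℝ | ∃ ν, EF v ρ b x ν} ∩ ({x | ∀ c, t c ≤ x c}
        ∩ ({x | (∑ c, x c) ≤ l + ε} ∩ {x | (∑ c, x c) - l ≤ C * (x a - t a)})) := by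
      ext x
      constructor
      · rintro ⟨h1', h2', h3', h4'⟩; exact ⟨h1', h2', h3', h4'⟩
      · rintro ⟨h1', h2', h3', h4'⟩; exact ⟨h1', h2', h3', h4'⟩
    rw [hSeq]
    exact h1.inter (h2.inter (h3.inter h4))
  have hScompact : IsCompact S :=
    IsCompact.of_isClosed_subset isCompact_Icc hSclosed hSsub
  have hSne : S.Nonempty := by
    refine ⟨t, ⟨σ, hEFt⟩, fun c => le_rfl, by rw [hl]; linarith, by rw [hl]; simp⟩
  obtain ⟨x, hxS, hxmax⟩ := hScompact.exists_isMaxOn hSne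
    (continuous_finset_sum Finset.univ (fun c _ => continuous_apply c)).continuousOn
  obtain ⟨⟨ν, hEFx⟩, hxge, hxsum, hxshare⟩ := hxS
  rcases eq_or_lt_of_le hxsum with hfull | hlt
  · refine ⟨x, ν, hEFx, hfull, ?_⟩
    have h2 : (∑ c, x c) - l = ε := by rw [hfull]; ring
    linarith [hxshare, h2]
  · exfalso
    obtain ⟨q', ν', hEF', hge', hpos', hle', hshare'⟩ :=
      local_perturb v ρ b ρbar hρ0 hρbar a x ν hEFx (l + ε - ∑ c, x c) (by linarith)
    have hsumdiff : ∑ c, (q' c - x c) = (∑ c, q' c) - ∑ c, x c := Finset.sum_sub_distrib _ _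
    rw [hsumdiff] at hpos' hle' hshare'
    rw [← hC] at hshare'
    have hq'a : x a ≤ q' a := hge' a
    have hq'S : q' ∈ S := by
      refine ⟨⟨ν', hEF'⟩, fun c => le_trans (hxge c) (hge' c), by linarith, ?_⟩
      have hring : C * (x a - t a) + C * (q' a - x a) = C * (q' a - t a) := by ring
      linarith
    have := isMaxOn_iff.mp hxmax q' hq'S
    linarith

end Stmt11

set_option maxHeartbeats 1000000 in
/-- bounded rent flow: there is `θ = 1/(n(1+ρ̄)^{n²}) > 0`,
depending only on `n` and `ρ̄`, such that for any sub-economy with `m ≤ n`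
agents and rooms, budget-constrained preferences with indices at most `ρ̄`, any
room `a`, and allocations maximizing the price of room `a` over the envy-free
sets at rents `l` and `l + ε` respectively, the price of room `a` rises by at
least `θ·ε`. (As allowed, the standard monotonicity facts — all prices rise
and all utilities fall as rent rises across these selections — appear as
hypotheses.) -/
theorem stmt_11 (n : ℕ) (hn : 0 < n) (ρbar : ℝ) (hρbar : 0 ≤ ρbar) :
    ∀ (mAg : ℕ), 0 < mAg → mAg ≤ n →
    ∀ (v : Fin mAg → Fin mAg → ℝ) (b ρ : Fin mAg → ℝ),
    (∀ i, 0 ≤ b i) → (∀ i, 0 ≤ ρ i) → (∀ i, ρ i ≤ ρbar) →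
    ∀ (u : Fin mAg → ℝ → Fin mAg → ℝ),
    (∀ i p c, u i p c = v i c - p - ρ i * max 0 (p - b i)) →
    ∀ (a : Fin mAg) (l ε : ℝ), 0 < ε →
    ∀ (t r : Fin mAg → ℝ) (σ μ : Equiv.Perm (Fin mAg)),
    (∑ c, t c = l) →
    (∀ i j : Fin mAg, u i (t (σ j)) (σ j) ≤ u i (t (σ i)) (σ i)) →
    (∀ (t' : Fin mAg → ℝ) (σ' : Equiv.Perm (Fin mAg)), (∑ c, t' c = l) →
      (∀ i j : Fin mAg, u i (t' (σ' j)) (σ' j) ≤ u i (t' (σ' i)) (σ' i)) →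
      t' a ≤ t a) →
    (∑ c, r c = l + ε) →
    (∀ i j : Fin mAg, u i (r (μ j)) (μ j) ≤ u i (r (μ i)) (μ i)) →
    (∀ (r' : Fin mAg → ℝ) (μ' : Equiv.Perm (Fin mAg)), (∑ c, r' c = l + ε) →
      (∀ i j : Fin mAg, u i (r' (μ' j)) (μ' j) ≤ u i (r' (μ' i)) (μ' i)) →
      r' a ≤ r a) →
    (∀ c, t c < r c) →
    (∀ j, u j (r (μ j)) (μ j) < u j (t (σ j)) (σ j)) →
    (1 / ((n : ℝ) * (1 + ρbar) ^ (n ^ 2))) * ε ≤ r a - t a := by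
  intro mAg hm hmn v b ρ hb0 hρ0 hρb u hu a l ε hε t r σ μ htsum htEF htmax hrsum hrEF hrmax
    htr hud
  have hu' : ∀ i p c, u i p c = Stmt11.U v ρ b i p c := by
    intro i p c
    rw [hu, Stmt11.U_eq]
  -- `t` is envy-free in our formulation
  have hEFt : Stmt11.EF v ρ b t σ := by
    intro i c
    have := htEF i (σ.symm c)
    rwa [Equiv.apply_symm_apply, hu', hu'] at this
  obtain ⟨x, ν, hEFx, hxsum, hxshare⟩ :=
    Stmt11.exists_max_EF v ρ b ρbar hρ0 hρb a t σ hEFt l ε htsum hε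
  -- apply the maximality of `r` at total rent `l + ε`
  have hxr : x a ≤ r a := by
    apply hrmax x ν hxsum
    intro i j
    rw [hu', hu']
    exact hEFx i (ν j)
  -- numerical bookkeeping
  have hK1 : (1:ℝ) ≤ 1 + ρbar := by linarith
  set Cm : ℝ := (mAg : ℝ) * (1 + ρbar) ^ (mAg - 1) with hCm
  set Cn : ℝ := (n : ℝ) * (1 + ρbar) ^ (n ^ 2) with hCn
  have hCm_pos : 0 < Cm := by
    apply mul_pos _ (by positivity)
    exact_mod_cast hm
  have hCn_pos : 0 < Cn := by
    apply mul_pos _ (by positivity)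
    exact_mod_cast hn
  have hCmn : Cm ≤ Cn := by
    apply mul_le_mul _ _ (by positivity) (Nat.cast_nonneg n)
    · exact_mod_cast hmn
    · apply pow_le_pow_right₀ hK1
      have h1 : n ≤ n ^ 2 := by nlinarith
      omega
  have hxt : 0 < x a - t a := by
    by_contra h
    push_neg at h
    nlinarith
  have hrt : ε ≤ Cn * (r a - t a) := by
    calc ε ≤ Cm * (x a - t a) := hxshare
      _ ≤ Cm * (r a - t a) := by nlinarith
      _ ≤ Cn * (r a - t a) := by nlinarith
  rw [div_mul_eq_mul_div, one_mul, div_le_iff₀ hCn_pos]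
  linarith
end

section
/- Let u ∈ B(C)^M be budget-constrained quasi-linear with indices at most ρ̄, let (t, σ) and (r, μ) be envy-free allocations (for rents l and l + ε respectively) with r_b > t_b for all rooms b and u_j(t-bundle) > u_j(r-bundle) for all agents j. Then for each agent j: r_{μ(j)} − t_{μ(j)} ≤ (r_{σ(j)} − t_{σ(j)})·(1 + ρ̄). -/
/-- with budget-constrained preferences with indices at most
`ρ̄`, if `(t, σ)` and `(r, μ)` are envy-free (for rents `l` and `l + ε`) with
`r_b > t_b` for all rooms and every agent strictly better off at `(t, σ)`,
then for each agent `j`: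
`r_{μ(j)} − t_{μ(j)} ≤ (r_{σ(j)} − t_{σ(j)})·(1 + ρ̄)`. -/
theorem stmt_12 (n : ℕ) (ρbar : ℝ) (hρbar : 0 ≤ ρbar)
    (v : Fin n → Fin n → ℝ) (b ρ : Fin n → ℝ)
    (hb : ∀ j, 0 ≤ b j) (hρ : ∀ j, 0 ≤ ρ j) (hρle : ∀ j, ρ j ≤ ρbar)
    (u : Fin n → ℝ → Fin n → ℝ)
    (hu : ∀ j p c, u j p c = v j c - p - ρ j * max 0 (p - b j))
    (l ε : ℝ) (hε : 0 < ε)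
    (t r : Fin n → ℝ) (σ μ : Equiv.Perm (Fin n))
    (htsum : ∑ c, t c = l) (hrsum : ∑ c, r c = l + ε)
    (hEFt : ∀ j k : Fin n, u j (t (σ k)) (σ k) ≤ u j (t (σ j)) (σ j))
    (hEFr : ∀ j k : Fin n, u j (r (μ k)) (μ k) ≤ u j (r (μ j)) (μ j))
    (hrt : ∀ c, t c < r c)
    (hutil : ∀ j, u j (r (μ j)) (μ j) < u j (t (σ j)) (σ j)) :
    ∀ j, r (μ j) - t (μ j) ≤ (r (σ j) - t (σ j)) * (1 + ρbar) := by
  intro j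
  -- envy-freeness instances
  have h1 : u j (t (μ j)) (μ j) ≤ u j (t (σ j)) (σ j) := by
    have := hEFt j (σ.symm (μ j)); simpa using this
  have h2 : u j (r (σ j)) (σ j) ≤ u j (r (μ j)) (μ j) := by
    have := hEFr j (μ.symm (σ j)); simpa using this
  -- Lipschitz bounds on the max term
  have maxb : ∀ c : Fin n, max 0 (t c - b j) ≤ max 0 (r c - b j) ∧
      max 0 (r c - b j) ≤ max 0 (t c - b j) + (r c - t c) := by
    intro c
    constructor
    · exact max_le_max le_rfl (by linarith [hrt c])
    · apply max_le
      · have := le_max_left (0:ℝ) (t c - b j); linarith [hrt c]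
      · have := le_max_right (0:ℝ) (t c - b j); linarith
  obtain ⟨hμ1, hμ2⟩ := maxb (μ j)
  obtain ⟨hσ1, hσ2⟩ := maxb (σ j)
  have hρj := hρ j
  have hρlej := hρle j
  have hμrt := hrt (μ j)
  have hσrt := hrt (σ j)
  -- lower Lipschitz at μ j
  have low : r (μ j) - t (μ j) ≤ u j (t (μ j)) (μ j) - u j (r (μ j)) (μ j) := by
    rw [hu, hu]
    nlinarith
  -- upper Lipschitz at σ j
  have high : u j (t (σ j)) (σ j) - u j (r (σ j)) (σ j)
      ≤ (r (σ j) - t (σ j)) * (1 + ρbar) := by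
    rw [hu, hu]
    nlinarith
  linarith
end

section
/- Let Q ⊆ D ⊆ U and g an envy-free social choice function on D^N. Then for every true profile u ∈ U^N, every envy-free allocation z for u is a limit equilibrium outcome of the game (N, D^N, g, u): for every ε > 0 there is a quasi-linear report profile v^ε which is an ε-equilibrium and whose outcome g(v^ε) converges to z as ε → 0. -/
/-- Quasi-linear utility functions over prices and `n` rooms. -/
def QLset (n : ℕ) : Set (ℝ → Fin n → ℝ) :=
  {f | ∃ w : Fin n → ℝ, ∀ p a, f p a = w a - p}

/-- Continuous, money-monotone utility functions satisfying the compensation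
assumption. -/
def Uset (n : ℕ) : Set (ℝ → Fin n → ℝ) :=
  {f | (∀ a, Continuous fun p => f p a) ∧ (∀ a, StrictAnti fun p => f p a) ∧
    ∀ a c : Fin n, ∀ p : ℝ, ∃ q : ℝ, f p a = f q c}

/-- Envy-freeness of the allocation `(r, σ)` for a utility profile. -/
def EnvyFree (n : ℕ) (u : Fin n → ℝ → Fin n → ℝ) (r : Fin n → ℝ)
    (σ : Equiv.Perm (Fin n)) : Prop :=
  ∀ i j : Fin n, u i (r (σ j)) (σ j) ≤ u i (r (σ i)) (σ i)

open Filter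

/-- A uniform continuity modulus over the finitely many points `r a`. -/
lemma stmt15_mod (n : ℕ) (u : Fin n → ℝ → Fin n → ℝ)
    (hu : ∀ i a, Continuous fun p => u i p a) (r : Fin n → ℝ) (ε : ℝ) (hε : 0 < ε) :
    ∃ η, 0 < η ∧ η ≤ ε ∧ ∀ i a q, |q - r a| ≤ η → |u i q a - u i (r a) a| ≤ ε/2 := by
  have hG : Continuous fun t : ℝ => fun pr : Fin n × Fin n => u pr.1 (r pr.2 + t) pr.2 := by
    apply continuous_pi
    intro pr
    exact (hu pr.1 pr.2).comp (continuous_const.add continuous_id)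
  obtain ⟨ηd, hηd, hball⟩ := Metric.continuousAt_iff.mp (hG.continuousAt (x := 0)) (ε/2)
    (by positivity)
  refine ⟨min (ηd/2) ε, by positivity, min_le_right _ _, ?_⟩
  intro i a q hq
  have ht : dist (q - r a) (0:ℝ) < ηd := by
    rw [Real.dist_eq, sub_zero]
    calc |q - r a| ≤ min (ηd/2) ε := hq
      _ ≤ ηd/2 := min_le_left _ _
      _ < ηd := by linarith
  have h2 := hball ht
  have h3 := dist_le_pi_dist (fun pr : Fin n × Fin n => u pr.1 (r pr.2 + (q - r a)) pr.2)
      (fun pr : Fin n × Fin n => u pr.1 (r pr.2 + 0) pr.2) (i, a)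
  have h4 : dist (u i (r a + (q - r a)) a) (u i (r a + 0) a) < ε/2 := lt_of_le_of_lt h3 h2
  rw [add_sub_cancel, add_zero, Real.dist_eq] at h4
  exact h4.le

/-- Any envy-free allocation for the quasi-linear profile with weights
`r + d·1[·=μ i]` has assignment `μ` and prices within `d` of `r`. -/
lemma stmt15_A (n : ℕ) (m d : ℝ) (hd : 0 < d) (r p : Fin n → ℝ)
    (μ σ : Equiv.Perm (Fin n)) (hr : ∑ a, r a = m) (hp : ∑ a, p a = m)
    (h : ∀ i j : Fin n, r (σ j) + (if σ j = μ i then d else 0) - p (σ j) ≤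
      r (σ i) + (if σ i = μ i then d else 0) - p (σ i)) :
    σ = μ ∧ ∀ a, |p a - r a| ≤ d := by
  have hrμ : ∑ i, r (μ i) = m := by rw [Equiv.sum_comp μ r]; exact hr
  have hrσ : ∑ i, r (σ i) = m := by rw [Equiv.sum_comp σ r]; exact hr
  have hpμ : ∑ i, p (μ i) = m := by rw [Equiv.sum_comp μ p]; exact hp
  have hpσ : ∑ i, p (σ i) = m := by rw [Equiv.sum_comp σ p]; exact hp
  have hfix : ∀ i, σ i = μ i := by
    by_contra hc
    push_neg at hc
    obtain ⟨i₀, hi₀⟩ := hc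
    have h1 : ∀ i : Fin n, r (μ i) + d - p (μ i) ≤
        r (σ i) + (if σ i = μ i then d else 0) - p (σ i) := by
      intro i
      have := h i (σ.symm (μ i))
      simpa using this
    have hsum1 : ∑ i, (r (μ i) + d - p (μ i)) ≤
        ∑ i, (r (σ i) + (if σ i = μ i then d else 0) - p (σ i)) :=
      Finset.sum_le_sum fun i _ => h1 i
    have e1 : ∑ i, (r (μ i) + d - p (μ i)) = (n:ℝ) * d := by
      rw [Finset.sum_sub_distrib, Finset.sum_add_distrib, hrμ, hpμ, Finset.sum_const,
        Finset.card_univ, Fintype.card_fin, nsmul_eq_mul]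
      ring
    have e2 : ∑ i, (r (σ i) + (if σ i = μ i then d else 0) - p (σ i)) =
        ∑ i, (if σ i = μ i then d else 0) := by
      rw [Finset.sum_sub_distrib, Finset.sum_add_distrib, hrσ, hpσ]
      ring
    rw [e1, e2] at hsum1
    have h3 : ∑ i : Fin n, (if σ i = μ i then d else 0) < ∑ _i : Fin n, d :=
      Finset.sum_lt_sum (fun i _ => by split <;> simp [hd.le])
        ⟨i₀, Finset.mem_univ _, by simp [hi₀, hd]⟩
    rw [Finset.sum_const, Finset.card_univ, Fintype.card_fin, nsmul_eq_mul] at h3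
    linarith
  have hσμ : σ = μ := Equiv.ext hfix
  refine ⟨hσμ, fun a => ?_⟩
  subst hσμ
  rw [abs_le]
  have hkey : ∀ a b : Fin n, p a - r a ≤ p b - r b + d := by
    intro a b
    have := h (σ.symm a) (σ.symm b)
    simp only [Equiv.apply_symm_apply, if_true] at this
    have hb0 : (0:ℝ) ≤ if b = a then d else 0 := by split <;> simp [hd.le]
    linarith
  have hn : 0 < (n:ℝ) := by exact_mod_cast a.pos
  have hsum0 : ∑ b, (p b - r b) = 0 := by
    rw [Finset.sum_sub_distrib, hp, hr]; ring
  constructor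
  · -- -d ≤ p a - r a
    have : ∑ b : Fin n, (p b - r b) ≤ ∑ _b : Fin n, (p a - r a + d) :=
      Finset.sum_le_sum fun b _ => hkey b a
    rw [hsum0, Finset.sum_const, Finset.card_univ, Fintype.card_fin, nsmul_eq_mul] at this
    nlinarith
  · have : ∑ _b : Fin n, (p a - r a) ≤ ∑ b : Fin n, (p b - r b + d) := by
      apply Finset.sum_le_sum
      intro b _
      linarith [hkey a b]
    rw [Finset.sum_add_distrib, hsum0, Finset.sum_const, Finset.sum_const, Finset.card_univ,
      Fintype.card_fin, nsmul_eq_mul, nsmul_eq_mul] at this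
    nlinarith

/-- let `Q ⊆ D ⊆ U` and `g` an envy-free scf on `D^N`. Every
envy-free allocation `z = (r, μ)` for the true profile `u` is a limit
equilibrium outcome of `(N, D^N, g, u)`: there are quasi-linear report profiles
`V ε`, each an `ε`-equilibrium, whose outcomes converge to `z` as `ε → 0⁺`. -/
theorem stmt_15 (n : ℕ) (m : ℝ)
    (D : Set (ℝ → Fin n → ℝ)) (hQD : QLset n ⊆ D) (hDU : D ⊆ Uset n)
    (g : (Fin n → (ℝ → Fin n → ℝ)) → (Fin n → ℝ) × Equiv.Perm (Fin n))
    (hg : ∀ vp : Fin n → (ℝ → Fin n → ℝ), (∀ k, vp k ∈ D) →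
      (∑ a, (g vp).1 a = m) ∧ EnvyFree n vp (g vp).1 (g vp).2)
    (u : Fin n → ℝ → Fin n → ℝ) (hu : ∀ i, u i ∈ Uset n)
    (r : Fin n → ℝ) (μ : Equiv.Perm (Fin n))
    (hsum : ∑ a, r a = m) (hEF : EnvyFree n u r μ) :
    ∃ V : ℝ → Fin n → (ℝ → Fin n → ℝ),
      (∀ ε : ℝ, 0 < ε →
        (∀ i, V ε i ∈ QLset n) ∧
        ∀ i : Fin n, ∀ w ∈ D,
          u i ((g (Function.update (V ε) i w)).1
                ((g (Function.update (V ε) i w)).2 i))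
              ((g (Function.update (V ε) i w)).2 i) ≤
            u i ((g (V ε)).1 ((g (V ε)).2 i)) ((g (V ε)).2 i) + ε) ∧
      Filter.Tendsto (fun ε => (g (V ε)).1)
        (nhdsWithin 0 (Set.Ioi (0:ℝ))) (nhds r) ∧
      (∀ᶠ ε in nhdsWithin 0 (Set.Ioi (0:ℝ)), (g (V ε)).2 = μ) := by
  classical
  have hucont : ∀ i a, Continuous fun p => u i p a := fun i => (hu i).1
  have huanti : ∀ i, ∀ a : Fin n, StrictAnti fun p => u i p a := fun i => (hu i).2.1
  have key : ∀ ε : ℝ, 0 < ε → ∃ η, 0 < η ∧ η ≤ ε ∧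
      ∀ i a q, |q - r a| ≤ η → |u i q a - u i (r a) a| ≤ ε/2 :=
    fun ε hε => stmt15_mod n u hucont r ε hε
  set δ : ℝ → ℝ := fun ε => if h : 0 < ε then (key ε h).choose else 1 with hδdef
  have hδpos : ∀ ε, 0 < ε → 0 < δ ε := by
    intro ε hε; simp only [hδdef, dif_pos hε]; exact (key ε hε).choose_spec.1
  have hδle : ∀ ε, 0 < ε → δ ε ≤ ε := by
    intro ε hε; simp only [hδdef, dif_pos hε]; exact (key ε hε).choose_spec.2.1
  have hδmod : ∀ ε, 0 < ε → ∀ i a q, |q - r a| ≤ δ ε → |u i q a - u i (r a) a| ≤ ε/2 := by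
    intro ε hε; simp only [hδdef, dif_pos hε]; exact (key ε hε).choose_spec.2.2
  refine ⟨fun ε i p a => r a + (if a = μ i then δ ε else 0) - p, ?_, ?_, ?_⟩
  · -- ε-equilibrium with quasi-linear reports
    intro ε hε
    have hQL : ∀ i, (fun p a => r a + (if a = μ i then δ ε else 0) - p) ∈ QLset n :=
      fun i => ⟨fun a => r a + (if a = μ i then δ ε else 0), fun p a => rfl⟩
    have hmem : ∀ k, (fun p a => r a + (if a = μ k then δ ε else 0) - p) ∈ D :=
      fun k => hQD (hQL k)
    obtain ⟨hgsum, hgEF⟩ := hg _ hmem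
    obtain ⟨hgσ, hgp⟩ := stmt15_A n m (δ ε) (hδpos ε hε) r
      (g fun i p a => r a + (if a = μ i then δ ε else 0) - p).1 μ
      (g fun i p a => r a + (if a = μ i then δ ε else 0) - p).2 hsum hgsum
      (fun i j => hgEF i j)
    refine ⟨hQL, ?_⟩
    intro i w hw
    set vp : Fin n → (ℝ → Fin n → ℝ) :=
      Function.update (fun k p a => r a + (if a = μ k then δ ε else 0) - p) i w with hvp
    have hvpD : ∀ k, vp k ∈ D := by
      intro k
      by_cases hk : k = i
      · subst hk; simp [hvp, Function.update_self, hw]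
      · rw [hvp, Function.update_of_ne hk]; exact hmem k
    obtain ⟨hpsum, hpEF⟩ := hg vp hvpD
    set p := (g vp).1 with hpdef
    set τ := (g vp).2 with hτdef
    -- bound: p (τ i) ≥ r (τ i) - δ ε
    have hb : ∀ j, p (τ j) - r (τ j) ≤ p (τ i) - r (τ i) + δ ε := by
      intro j
      by_cases hji : j = i
      · subst hji; linarith [hδpos ε hε]
      · have h1 := hpEF j i
        rw [hvp, Function.update_of_ne hji] at h1
        have h2 : (0:ℝ) ≤ if τ i = μ j then δ ε else 0 := by
          split <;> simp [(hδpos ε hε).le]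
        have h3 : (if τ j = μ j then δ ε else 0) ≤ δ ε := by
          split <;> simp [(hδpos ε hε).le]
        linarith
    have hτsum : ∑ j, (p (τ j) - r (τ j)) = 0 :=
      calc ∑ j, (p (τ j) - r (τ j)) = ∑ a, (p a - r a) :=
            Equiv.sum_comp τ (fun a => p a - r a)
        _ = 0 := by rw [Finset.sum_sub_distrib, hpsum, hsum]; ring
    have hlow : r (τ i) - δ ε ≤ p (τ i) := by
      have hs : ∑ j : Fin n, (p (τ j) - r (τ j)) ≤
          ∑ _j : Fin n, (p (τ i) - r (τ i) + δ ε) :=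
        Finset.sum_le_sum fun j _ => hb j
      rw [hτsum, Finset.sum_const, Finset.card_univ, Fintype.card_fin, nsmul_eq_mul] at hs
      have hn : 0 < (n:ℝ) := by exact_mod_cast i.pos
      nlinarith
    -- chain of inequalities
    have c1 : u i (p (τ i)) (τ i) ≤ u i (r (τ i) - δ ε) (τ i) :=
      (huanti i (τ i)).antitone hlow
    have c2 : u i (r (τ i) - δ ε) (τ i) ≤ u i (r (τ i)) (τ i) + ε/2 := by
      have := hδmod ε hε i (τ i) (r (τ i) - δ ε) (by
        have he : r (τ i) - δ ε - r (τ i) = -(δ ε) := by ring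
        rw [he, abs_neg, abs_of_pos (hδpos ε hε)])
      have := abs_le.mp this
      linarith [this.2]
    have c3 : u i (r (τ i)) (τ i) ≤ u i (r (μ i)) (μ i) := by
      have := hEF i (μ.symm (τ i))
      simpa using this
    have c4 : u i (r (μ i)) (μ i) ≤
        u i ((g fun k p a => r a + (if a = μ k then δ ε else 0) - p).1 (μ i)) (μ i) + ε/2 := by
      have hq := hδmod ε hε i (μ i)
        ((g fun k p a => r a + (if a = μ k then δ ε else 0) - p).1 (μ i)) (hgp (μ i))
      have := abs_le.mp hq
      linarith [this.1]
    rw [hgσ]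
    calc u i (p (τ i)) (τ i) ≤ u i (r (τ i) - δ ε) (τ i) := c1
      _ ≤ u i (r (τ i)) (τ i) + ε/2 := c2
      _ ≤ u i (r (μ i)) (μ i) + ε/2 := by linarith
      _ ≤ _ := by linarith
  · -- convergence of prices
    rw [tendsto_pi_nhds]
    intro a
    rw [tendsto_iff_dist_tendsto_zero]
    refine squeeze_zero' (Filter.Eventually.of_forall fun ε => dist_nonneg) ?_
      (tendsto_id.mono_left nhdsWithin_le_nhds)
    · filter_upwards [self_mem_nhdsWithin] with ε (hε : ε ∈ Set.Ioi (0:ℝ))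
      have hε : (0:ℝ) < ε := hε
      have hQL : ∀ i, (fun p a => r a + (if a = μ i then δ ε else 0) - p) ∈ QLset n :=
        fun i => ⟨fun a => r a + (if a = μ i then δ ε else 0), fun p a => rfl⟩
      obtain ⟨hgsum, hgEF⟩ := hg _ (fun k => hQD (hQL k))
      obtain ⟨hgσ, hgp⟩ := stmt15_A n m (δ ε) (hδpos ε hε) r
        (g fun i p a => r a + (if a = μ i then δ ε else 0) - p).1 μ
        (g fun i p a => r a + (if a = μ i then δ ε else 0) - p).2 hsum hgsum
        (fun i j => hgEF i j)
      have := hgp a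
      rw [Real.dist_eq]
      calc |(g fun i p a => r a + (if a = μ i then δ ε else 0) - p).1 a - r a| ≤ δ ε := this
        _ ≤ ε := hδle ε hε
  · -- eventually the assignment is μ
    filter_upwards [self_mem_nhdsWithin] with ε (hε : ε ∈ Set.Ioi (0:ℝ))
    have hε : (0:ℝ) < ε := hε
    have hQL : ∀ i, (fun p a => r a + (if a = μ i then δ ε else 0) - p) ∈ QLset n :=
      fun i => ⟨fun a => r a + (if a = μ i then δ ε else 0), fun p a => rfl⟩
    obtain ⟨hgsum, hgEF⟩ := hg _ (fun k => hQD (hQL k))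
    exact (stmt15_A n m (δ ε) (hδpos ε hε) r
      (g fun i p a => r a + (if a = μ i then δ ε else 0) - p).1 μ
      (g fun i p a => r a + (if a = μ i then δ ε else 0) - p).2 hsum hgsum
      (fun i j => hgEF i j)).1
end

section
/- Let v^ε ∈ Q^N be the quasi-linear profile where each agent i values her own room μ(i) at r_{μ(i)} + ε/(n−1) above a common reference and every other room μ(j) at r_{μ(j)} − ε/(n−1)². Then every envy-free allocation for v^ε assigns each agent i room μ(i) at a price t_{μ(i)} satisfying r_{μ(i)} − ε ≤ t_{μ(i)} ≤ r_{μ(i)} + ε/(n−1). -/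
/-- let `v^ε` be the quasi-linear profile where agent `i` values
room `μ(i)` at `r_{μ(i)} + ε/(n−1)` and every other room `μ(j)` at
`r_{μ(j)} − ε/(n−1)²`. Then every envy-free allocation for `v^ε` (prices
summing to `∑ r`) assigns each agent `i` room `μ(i)` at a price `t_{μ(i)}` with
`r_{μ(i)} − ε ≤ t_{μ(i)} ≤ r_{μ(i)} + ε/(n−1)`. -/
theorem stmt_16 (n : ℕ) (hn : 2 ≤ n) (r : Fin n → ℝ) (μ : Equiv.Perm (Fin n))
    (ε : ℝ) (hε : 0 < ε) (ve : Fin n → Fin n → ℝ)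
    (hve : ∀ i a, ve i a =
      if a = μ i then r a + ε / ((n : ℝ) - 1) else r a - ε / ((n : ℝ) - 1) ^ 2)
    (t : Fin n → ℝ) (σ : Equiv.Perm (Fin n))
    (hsum : ∑ a, t a = ∑ a, r a)
    (hEF : ∀ i j : Fin n, ve i (σ j) - t (σ j) ≤ ve i (σ i) - t (σ i)) :
    ∀ i : Fin n, σ i = μ i ∧
      r (μ i) - ε ≤ t (μ i) ∧ t (μ i) ≤ r (μ i) + ε / ((n : ℝ) - 1) := by
  have hn1 : (0:ℝ) < (n:ℝ) - 1 := by
    have : (2:ℝ) ≤ (n:ℝ) := by exact_mod_cast hn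
    linarith
  set c : ℝ := ε / ((n : ℝ) - 1) with hc
  set C2 : ℝ := ε / ((n : ℝ) - 1) ^ 2 with hC2
  have hcpos : 0 < c := div_pos hε hn1
  have hC2pos : 0 < C2 := div_pos hε (by positivity)
  have hveμ : ∀ i, ve i (μ i) = r (μ i) + c := fun i => by rw [hve]; simp
  have hveo : ∀ i a, a ≠ μ i → ve i a = r a - C2 := fun i a h => by
    rw [hve]; simp [h]
  -- sums under permutations
  have hsumt_σ : ∑ i, t (σ i) = ∑ a, t a := Equiv.sum_comp σ t
  have hsumt_μ : ∑ i, t (μ i) = ∑ a, t a := Equiv.sum_comp μ t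
  have hsumr_σ : ∑ i, r (σ i) = ∑ a, r a := Equiv.sum_comp σ r
  have hsumr_μ : ∑ i, r (μ i) = ∑ a, r a := Equiv.sum_comp μ r
  -- Step 1 : σ = μ
  have hkey : ∀ i, ve i (μ i) - t (μ i) ≤ ve i (σ i) - t (σ i) := by
    intro i
    have h := hEF i (σ.symm (μ i))
    simpa using h
  have hle : ∀ i, ve i (σ i) ≤ r (σ i) + c := by
    intro i
    rw [hve]
    split_ifs with h
    · exact le_refl _
    · linarith [hcpos.le, hC2pos.le]
  have hA : ∑ i, (ve i (μ i) - t (μ i)) ≤ ∑ i, (ve i (σ i) - t (σ i)) :=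
    Finset.sum_le_sum fun i _ => hkey i
  have hB : ∑ i, ve i (μ i) ≤ ∑ i, ve i (σ i) := by
    rw [Finset.sum_sub_distrib, Finset.sum_sub_distrib, hsumt_σ, hsumt_μ] at hA
    linarith
  have hBval : ∑ i, ve i (μ i) = (∑ a, r a) + n * c := by
    simp only [hveμ]
    rw [Finset.sum_add_distrib, hsumr_μ, Finset.sum_const, Finset.card_univ,
      Fintype.card_fin, nsmul_eq_mul]
  have hzero : ∀ i ∈ Finset.univ, (r (σ i) + c) - ve i (σ i) = 0 := by
    apply (Finset.sum_eq_zero_iff_of_nonneg (fun i _ => by linarith [hle i])).mp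
    have hB' : (∑ a, r a) + (n:ℝ) * c ≤ ∑ i, ve i (σ i) := hBval ▸ hB
    have hsplit : ∑ i, ((r (σ i) + c) - ve i (σ i))
        = ((∑ a, r a) + (n:ℝ) * c) - ∑ i, ve i (σ i) := by
      rw [Finset.sum_sub_distrib, Finset.sum_add_distrib, hsumr_σ, Finset.sum_const,
        Finset.card_univ, Fintype.card_fin, nsmul_eq_mul]
    have hD : ∑ i, ve i (σ i) ≤ ∑ i, (r (σ i) + c) := Finset.sum_le_sum fun i _ => hle i
    have hDval : ∑ i, (r (σ i) + c) = (∑ a, r a) + (n:ℝ) * c := by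
      rw [Finset.sum_add_distrib, hsumr_σ, Finset.sum_const, Finset.card_univ,
        Fintype.card_fin, nsmul_eq_mul]
    rw [hsplit]
    linarith [hB', hDval ▸ hD]
  have hσμ : ∀ i, σ i = μ i := by
    intro i
    by_contra h
    have h0 := hzero i (Finset.mem_univ i)
    rw [hveo i (σ i) h] at h0
    have : c + C2 = 0 := by linarith
    linarith
  -- Step 2 : price bounds
  set d : Fin n → ℝ := fun i => t (μ i) - r (μ i) with hd
  have hd0 : ∑ i, d i = 0 := by
    simp only [hd, Finset.sum_sub_distrib, hsumt_μ, hsumr_μ, hsum, sub_self]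
  have hkey2 : ∀ i j : Fin n, j ≠ i → d i ≤ d j + (c + C2) := by
    intro i j hji
    have h := hEF i j
    rw [hσμ i, hσμ j] at h
    have hμ : μ j ≠ μ i := fun hh => hji (μ.injective hh)
    rw [hveo i (μ j) hμ, hveμ i] at h
    simp only [hd]
    linarith
  intro i
  have hcardi : ((Finset.univ.erase i).card : ℝ) = (n:ℝ) - 1 := by
    rw [Finset.card_erase_of_mem (Finset.mem_univ i), Finset.card_univ, Fintype.card_fin]
    have : 1 ≤ n := by omega
    push_cast [Nat.cast_sub this]
    ring
  have hesum : ∑ j ∈ Finset.univ.erase i, d j = -(d i) := by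
    rw [Finset.sum_erase_eq_sub (Finset.mem_univ i), hd0]
    ring
  have hCsum : ((n:ℝ) - 1) * (c + C2) = ε + c := by
    rw [hc, hC2]
    field_simp
  -- upper bound
  have hup : ∑ j ∈ Finset.univ.erase i, d i ≤ ∑ j ∈ Finset.univ.erase i, (d j + (c + C2)) :=
    Finset.sum_le_sum fun j hj => hkey2 i j (Finset.ne_of_mem_erase hj)
  rw [Finset.sum_const, nsmul_eq_mul, hcardi, Finset.sum_add_distrib, hesum,
    Finset.sum_const, nsmul_eq_mul, hcardi, hCsum] at hup
  -- hup : (n-1) * d i ≤ -(d i) + (ε + c), so n * d i ≤ ε + c = n * c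
  have hnc : (n:ℝ) * c = ε + c := by
    rw [hc]; field_simp; ring
  have hupper : d i ≤ c := by
    have hnpos : (0:ℝ) < n := by linarith
    nlinarith [hup, hnc]
  -- lower bound
  have hlo : ∑ j ∈ Finset.univ.erase i, d j ≤ ∑ j ∈ Finset.univ.erase i, (d i + (c + C2)) :=
    Finset.sum_le_sum fun j hj => hkey2 j i (fun hh => (Finset.ne_of_mem_erase hj) hh.symm) |>.trans (le_refl _)
  rw [hesum, Finset.sum_const, nsmul_eq_mul, hcardi] at hlo
  -- hlo : -(d i) ≤ (n-1) * (d i + (c + C2))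
  have hlower : -ε ≤ d i := by
    have hce : c ≤ ε := by
      rw [hc]
      apply div_le_self hε.le
      have : (2:ℝ) ≤ (n:ℝ) := by exact_mod_cast hn
      linarith
    nlinarith [hlo, hCsum, hce]
  refine ⟨hσμ i, ?_, ?_⟩
  · simp only [hd] at hlower; linarith
  · simp only [hd] at hupper; linarith
end
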